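/- arXiv:1911.04181 — 3 statements merged into one kernel-verified Lean document; each statement's English description precedes it below -/
import Mathlib

section
/- The map ι : Γ₂ → Γ determined by a₁ ↦ q₂q₁, b₁ ↦ q₂q₃, a₂ ↦ q₅q₄, b₂ ↦ q₅q₆ is a well-defined group homomorphism (the relator [a₂,b₂][a₁,b₁] is sent to 1), is injective, and its image is a subgroup of index 2 in Γ. -/
/- Common setup: PSL(2,ℂ), its action on ℙ¹(ℂ), loxodromic/parabolic/elliptic elements,
elementary subgroups, surface groups, the pentagon group Γ and the embedding ι. -/

noncomputable section

open Matrix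

/-- `SL(2,ℂ)`. -/
abbrev SL2C : Type := Matrix.SpecialLinearGroup (Fin 2) ℂ

instance : TopologicalSpace SL2C := instTopologicalSpaceSubtype

/-- `PSL(2,ℂ)`, the quotient of `SL(2,ℂ)` by its center `{±I}`. -/
abbrev PSL2C : Type := SL2C ⧸ Subgroup.center SL2C

/-- The quotient map `SL(2,ℂ) → PSL(2,ℂ)`. -/
def projPSL : SL2C →* PSL2C := QuotientGroup.mk' (Subgroup.center SL2C)

/-- The complex projective line `ℙ¹(ℂ)`. -/
abbrev P1 : Type := Projectivization ℂ (Fin 2 → ℂ)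

/-- The square of the trace, well defined on `PSL(2,ℂ)`. -/
def trSq (g : PSL2C) : ℂ :=
  (Matrix.trace ((Quotient.out g : SL2C) : Matrix (Fin 2) (Fin 2) ℂ)) ^ 2

/-- `g` is loxodromic iff `tr² g` is not a real number in `[0,4]`. -/
def IsLoxodromic (g : PSL2C) : Prop := ¬ ∃ r : ℝ, 0 ≤ r ∧ r ≤ 4 ∧ trSq g = (r : ℂ)

/-- `g` is parabolic iff `g ≠ 1` and `tr² g = 4`. -/
def IsParabolic (g : PSL2C) : Prop := g ≠ 1 ∧ trSq g = 4

/-- `g` is elliptic iff `g ≠ 1` and `tr² g` is a real number in `[0,4)`. -/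
def IsElliptic (g : PSL2C) : Prop := g ≠ 1 ∧ ∃ r : ℝ, 0 ≤ r ∧ r < 4 ∧ trSq g = (r : ℂ)

lemma sl2_toLin'_injective (g : SL2C) :
    Function.Injective (Matrix.toLin' (g : Matrix (Fin 2) (Fin 2) ℂ)) := by
  intro v w h
  have h2 : Matrix.toLin' ((g⁻¹ : SL2C) : Matrix (Fin 2) (Fin 2) ℂ)
      (Matrix.toLin' ((g : SL2C) : Matrix (Fin 2) (Fin 2) ℂ) v) =
      Matrix.toLin' ((g⁻¹ : SL2C) : Matrix (Fin 2) (Fin 2) ℂ)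
      (Matrix.toLin' ((g : SL2C) : Matrix (Fin 2) (Fin 2) ℂ) w) := by rw [h]
  rwa [← Matrix.toLin'_mul_apply, ← Matrix.toLin'_mul_apply,
    ← Matrix.SpecialLinearGroup.coe_mul, inv_mul_cancel,
    Matrix.SpecialLinearGroup.coe_one, Matrix.toLin'_one, LinearMap.id_apply,
    LinearMap.id_apply] at h2

/-- The action of `PSL(2,ℂ)` on `ℙ¹(ℂ)` by Möbius transformations (independent of the
choice of representative, since the center acts trivially on lines). -/
def pslAct (g : PSL2C) (x : P1) : P1 :=
  Projectivization.map (Matrix.toLin' ((Quotient.out g : SL2C) : Matrix (Fin 2) (Fin 2) ℂ))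
    (sl2_toLin'_injective _) x

/-- A subgroup of `PSL(2,ℂ)` is elementary if it has a nonempty invariant subset of `ℙ¹(ℂ)`
with at most two elements, or its closure is compact. -/
def IsElementarySubgroup (G : Subgroup PSL2C) : Prop :=
  (∃ S : Set P1, S.Nonempty ∧ S.Finite ∧ S.ncard ≤ 2 ∧ ∀ g ∈ G, pslAct g '' S = S) ∨
    IsCompact (closure (G : Set PSL2C))

/-- A homomorphism to `PSL(2,ℂ)` is non-elementary if its image is non-elementary. -/
def IsNonElem {H : Type*} [Group H] (ρ : H →* PSL2C) : Prop :=
  ¬ IsElementarySubgroup ρ.range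

/-- `g` sends a fixed point of `h` to the other one. -/
def SendsFixedToOther (g h : PSL2C) : Prop :=
  ∃ p q : P1, p ≠ q ∧ pslAct h p = p ∧ pslAct h q = q ∧ (pslAct g p = q ∨ pslAct g q = p)

/-- `g` interchanges the two fixed points of `h`. -/
def InterchangesFixed (g h : PSL2C) : Prop :=
  ∃ p q : P1, p ≠ q ∧ pslAct h p = p ∧ pslAct h q = q ∧ pslAct g p = q ∧ pslAct g q = p

/-- `PSL(2,ℝ)` as a subgroup of `PSL(2,ℂ)`: the image of `SL(2,ℝ)`. -/
def PSL2R : Subgroup PSL2C :=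
  (projPSL.comp (Matrix.SpecialLinearGroup.map (n := Fin 2) Complex.ofRealHom)).range

/-- `γ₁, γ₂` generate a rank-two Schottky group: the induced map from the free group `F₂` is
injective, with discrete image, all of whose nontrivial elements are loxodromic. -/
def GeneratesSchottky (γ₁ γ₂ : PSL2C) : Prop :=
  Function.Injective (FreeGroup.lift ![γ₁, γ₂] : FreeGroup (Fin 2) →* PSL2C) ∧
    DiscreteTopology ((FreeGroup.lift ![γ₁, γ₂] : FreeGroup (Fin 2) →* PSL2C).range) ∧
    ∀ g ∈ (FreeGroup.lift ![γ₁, γ₂] : FreeGroup (Fin 2) →* PSL2C).range, g ≠ 1 → IsLoxodromic g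

/-- The commutator `[x,y] = y⁻¹x⁻¹yx` in a free group. -/
def commF {α : Type*} (x y : FreeGroup α) : FreeGroup α := y⁻¹ * x⁻¹ * y * x

/-- The surface relator `[a_g,b_g]⋯[a₁,b₁]`. -/
def surfaceRel (g : ℕ) : FreeGroup (Fin g × Bool) :=
  (((List.finRange g).reverse).map
    (fun i => commF (FreeGroup.of (i, false)) (FreeGroup.of (i, true)))).prod

/-- The genus-`g` surface group `Γ_g`. -/
abbrev SurfaceGroup (g : ℕ) : Type :=
  PresentedGroup ({surfaceRel g} : Set (FreeGroup (Fin g × Bool)))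

/-- The generator `a_{i+1}` of `Γ_g`. -/
def sgA (g : ℕ) (i : Fin g) : SurfaceGroup g := PresentedGroup.of (i, false)

/-- The generator `b_{i+1}` of `Γ_g`. -/
def sgB (g : ℕ) (i : Fin g) : SurfaceGroup g := PresentedGroup.of (i, true)

/-- The genus-2 surface group `Γ₂`. -/
abbrev Gamma2 : Type := SurfaceGroup 2
def a1 : Gamma2 := sgA 2 0
def b1 : Gamma2 := sgB 2 0
def a2 : Gamma2 := sgA 2 1
def b2 : Gamma2 := sgB 2 1

/-- Relations for the group `Γ = ⟨q₁,…,q₆ ∣ qᵢ² = 1, q₁q₂q₃q₄q₅q₆ = 1⟩`. -/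
def pentagonRels : Set (FreeGroup (Fin 6)) :=
  (Set.range fun i : Fin 6 => FreeGroup.of i * FreeGroup.of i) ∪
    {((List.finRange 6).map FreeGroup.of).prod}

/-- The group `Γ = ⟨q₁,…,q₆ ∣ qᵢ² = 1, q₁q₂q₃q₄q₅q₆ = 1⟩`. -/
abbrev GammaP : Type := PresentedGroup pentagonRels

/-- The generator `q_{i+1}` of `Γ`. -/
def qgen (i : Fin 6) : GammaP := PresentedGroup.of i

lemma qgen_mul_self (i : Fin 6) : qgen i * qgen i = 1 := by
  have hmem : FreeGroup.of i * FreeGroup.of i ∈ pentagonRels :=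
    Set.mem_union_left _ ⟨i, rfl⟩
  have h : (PresentedGroup.mk pentagonRels (FreeGroup.of i * FreeGroup.of i)) = 1 :=
    (QuotientGroup.eq_one_iff _).mpr (Subgroup.subset_normalClosure hmem)
  rw [_root_.map_mul] at h
  exact h

lemma qgen_prod : qgen 0 * (qgen 1 * (qgen 2 * (qgen 3 * (qgen 4 * qgen 5)))) = 1 := by
  have hmem : ((List.finRange 6).map FreeGroup.of).prod ∈ pentagonRels :=
    Set.mem_union_right _ rfl
  have h : (PresentedGroup.mk pentagonRels (((List.finRange 6).map FreeGroup.of).prod)) = 1 :=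
    (QuotientGroup.eq_one_iff _).mpr (Subgroup.subset_normalClosure hmem)
  have h6 : List.finRange 6 = [0, 1, 2, 3, 4, 5] := by decide
  rw [h6] at h
  simp [mul_assoc] at h
  exact h

lemma pent_helper {G : Type*} [Group G] (x : Fin 6 → G) (hx : ∀ i, x i * x i = 1)
    (hp : x 0 * (x 1 * (x 2 * (x 3 * (x 4 * x 5)))) = 1) :
    (x 4 * x 5)⁻¹ * (x 4 * x 3)⁻¹ * (x 4 * x 5) * (x 4 * x 3) *
      ((x 1 * x 2)⁻¹ * (x 1 * x 0)⁻¹ * (x 1 * x 2) * (x 1 * x 0)) = 1 := by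
  have hinv : ∀ i, (x i)⁻¹ = x i := fun i => inv_eq_of_mul_eq_one_right (hx i)
  have hrev : x 5 * (x 4 * (x 3 * (x 2 * (x 1 * x 0)))) = 1 := by
    have h := congrArg (·⁻¹) hp
    simpa [_root_.mul_inv_rev, hinv, mul_assoc] using h
  have key : ∀ (i : Fin 6) (t : G), x i * (x i * t) = t := fun i t => by
    rw [← mul_assoc, hx, one_mul]
  have key2 : ∀ t : G, x 5 * (x 4 * (x 3 * (x 2 * (x 1 * (x 0 * t))))) = t := fun t => by
    calc x 5 * (x 4 * (x 3 * (x 2 * (x 1 * (x 0 * t)))))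
        = (x 5 * (x 4 * (x 3 * (x 2 * (x 1 * x 0))))) * t := by simp [mul_assoc]
      _ = t := by rw [hrev, one_mul]
  simp only [_root_.mul_inv_rev, hinv, mul_assoc]
  simp only [key, key2]
  exact hrev

/-- The images of the generators `a₁, b₁, a₂, b₂` under `ι`. -/
def pentMap : Fin 2 × Bool → GammaP
  | (0, false) => qgen 1 * qgen 0
  | (0, true) => qgen 1 * qgen 2
  | (1, false) => qgen 4 * qgen 3
  | (1, true) => qgen 4 * qgen 5

lemma surfaceRel_two :
    surfaceRel 2 = commF (FreeGroup.of ((1 : Fin 2), false)) (FreeGroup.of ((1 : Fin 2), true)) *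
      commF (FreeGroup.of ((0 : Fin 2), false)) (FreeGroup.of ((0 : Fin 2), true)) := by
  have h : List.finRange 2 = [0, 1] := by decide
  simp [surfaceRel, h]

/-- The embedding `ι : Γ₂ → Γ`, `a₁ ↦ q₂q₁`, `b₁ ↦ q₂q₃`, `a₂ ↦ q₅q₄`, `b₂ ↦ q₅q₆`. -/
def iota : Gamma2 →* GammaP :=
  PresentedGroup.toGroup (f := pentMap) (by
    intro r hr
    rw [Set.mem_singleton_iff] at hr
    subst hr
    rw [surfaceRel_two]
    simp only [commF, _root_.map_mul, _root_.map_inv, FreeGroup.lift_apply_of]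
    have h01 : pentMap ((0 : Fin 2), false) = qgen 1 * qgen 0 := rfl
    have h02 : pentMap ((0 : Fin 2), true) = qgen 1 * qgen 2 := rfl
    have h11 : pentMap ((1 : Fin 2), false) = qgen 4 * qgen 3 := rfl
    have h12 : pentMap ((1 : Fin 2), true) = qgen 4 * qgen 5 := rfl
    rw [h01, h02, h11, h12]
    exact pent_helper (fun i => qgen i) qgen_mul_self qgen_prod)

/-- A pentagon representation: a non-elementary `ρ : Γ₂ → PSL(2,ℂ)` extending to `Γ` with
exactly one `qᵢ` killed. -/
def IsPentagonRep (ρ : Gamma2 →* PSL2C) : Prop :=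
  IsNonElem ρ ∧ ∃ ρ' : GammaP →* PSL2C, ρ'.comp iota = ρ ∧ ∃! i : Fin 6, ρ' (qgen i) = 1

/-- A primitive element of the free group `F₂`: part of a free basis. -/
def IsPrimitiveF2 (γ : FreeGroup (Fin 2)) : Prop :=
  ∃ φ : MulAut (FreeGroup (Fin 2)), φ (FreeGroup.of 0) = γ

/-- `pp` and `pm` are the attracting resp. repelling fixed points of `α`: for a representative
`A ∈ SL(2,ℂ)` with eigenvalues `l, l⁻¹`, `|l| > 1`, they are the corresponding eigenlines. -/
def IsAttrRep (α : PSL2C) (pp pm : P1) : Prop :=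
  ∃ A : SL2C, projPSL A = α ∧ ∃ l : ℂ, 1 < ‖l‖ ∧
    ∃ (v w : Fin 2 → ℂ) (hv : v ≠ 0) (hw : w ≠ 0),
      (A : Matrix (Fin 2) (Fin 2) ℂ) *ᵥ v = l • v ∧
      (A : Matrix (Fin 2) (Fin 2) ℂ) *ᵥ w = l⁻¹ • w ∧
      pp = Projectivization.mk ℂ v hv ∧ pm = Projectivization.mk ℂ w hw

/-! ### Auxiliary development for statement6 -/

section Statement6Aux

/-- The surface relation in `Γ₂`. -/
lemma grel : b2⁻¹ * a2⁻¹ * b2 * a2 * (b1⁻¹ * a1⁻¹ * b1 * a1) = (1 : Gamma2) := by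
  have hmem : surfaceRel 2 ∈ ({surfaceRel 2} : Set (FreeGroup (Fin 2 × Bool))) := rfl
  have h : (PresentedGroup.mk {surfaceRel 2} (surfaceRel 2) : Gamma2) = 1 :=
    (QuotientGroup.eq_one_iff _).mpr (Subgroup.subset_normalClosure hmem)
  rw [surfaceRel_two] at h
  simp only [commF, _root_.map_mul, _root_.map_inv] at h
  exact h

/-- The element `x = b₁a₁b₂⁻¹a₂⁻¹` of `Γ₂`. -/
def xw : Gamma2 := b1 * a1 * b2⁻¹ * a2⁻¹

/-- The hyperelliptic-type involution on generators. -/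
def phiMap : Fin 2 × Bool → Gamma2
  | (0, false) => a1⁻¹
  | (0, true) => b1⁻¹
  | (1, false) => xw * a2⁻¹ * xw⁻¹
  | (1, true) => xw * b2⁻¹ * xw⁻¹

lemma phi_lift_rel : ∀ r ∈ ({surfaceRel 2} : Set (FreeGroup (Fin 2 × Bool))),
    FreeGroup.lift phiMap r = 1 := by
  intro r hr
  rw [Set.mem_singleton_iff] at hr
  subst hr
  rw [congrArg (FreeGroup.lift phiMap) surfaceRel_two]
  simp only [commF, _root_.map_mul, _root_.map_inv, FreeGroup.lift_apply_of]
  have h01 : phiMap ((0 : Fin 2), false) = a1⁻¹ := rfl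
  have h02 : phiMap ((0 : Fin 2), true) = b1⁻¹ := rfl
  have h11 : phiMap ((1 : Fin 2), false) = xw * a2⁻¹ * xw⁻¹ := rfl
  have h12 : phiMap ((1 : Fin 2), true) = xw * b2⁻¹ * xw⁻¹ := rfl
  rw [h01, h02, h11, h12]
  unfold xw
  trans ((a1*b1*a2⁻¹*b2⁻¹*a2*b2) * (b2⁻¹ * a2⁻¹ * b2 * a2 * (b1⁻¹ * a1⁻¹ * b1 * a1)) *
      (a1*b1*a2⁻¹*b2⁻¹*a2*b2)⁻¹)
  · group
  · rw [grel]; group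

/-- The involution `φ : Γ₂ → Γ₂`. -/
def phiH : Gamma2 →* Gamma2 := PresentedGroup.toGroup phi_lift_rel

lemma phiH_a1 : phiH a1 = a1⁻¹ := PresentedGroup.toGroup.of phi_lift_rel
lemma phiH_b1 : phiH b1 = b1⁻¹ := PresentedGroup.toGroup.of phi_lift_rel
lemma phiH_a2 : phiH a2 = xw * a2⁻¹ * xw⁻¹ := PresentedGroup.toGroup.of phi_lift_rel
lemma phiH_b2 : phiH b2 = xw * b2⁻¹ * xw⁻¹ := PresentedGroup.toGroup.of phi_lift_rel

lemma phiH_phiH : ∀ g : Gamma2, phiH (phiH g) = g := by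
  have h : phiH.comp phiH = MonoidHom.id Gamma2 := by
    apply PresentedGroup.ext
    rintro ⟨i, b⟩
    fin_cases i <;> cases b <;>
      simp only [MonoidHom.comp_apply, MonoidHom.id_apply]
    · -- (0, false) : a1
      show phiH (phiH a1) = a1
      rw [phiH_a1, _root_.map_inv, phiH_a1, inv_inv]
    · -- (0, true) : b1
      show phiH (phiH b1) = b1
      rw [phiH_b1, _root_.map_inv, phiH_b1, inv_inv]
    · -- (1, false) : a2
      show phiH (phiH a2) = a2
      rw [phiH_a2]
      simp only [xw, _root_.map_mul, _root_.map_inv, phiH_a1, phiH_b1, phiH_a2, phiH_b2]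
      trans ((a2⁻¹*b2⁻¹*a2*b2) * (b2⁻¹ * a2⁻¹ * b2 * a2 * (b1⁻¹ * a1⁻¹ * b1 * a1)) *
          (a2⁻¹*b2⁻¹*a2*b2)⁻¹ *
          ((a2*b1⁻¹*a1⁻¹*b1*a1) * (b2⁻¹ * a2⁻¹ * b2 * a2 * (b1⁻¹ * a1⁻¹ * b1 * a1))⁻¹ *
            (a2*b1⁻¹*a1⁻¹*b1*a1)⁻¹) * a2)
      · group
      · rw [grel]; group
    · -- (1, true) : b2
      show phiH (phiH b2) = b2
      rw [phiH_b2]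
      simp only [xw, _root_.map_mul, _root_.map_inv, phiH_a1, phiH_b1, phiH_a2, phiH_b2]
      trans ((a2⁻¹*b2⁻¹*a2*b2) * (b2⁻¹ * a2⁻¹ * b2 * a2 * (b1⁻¹ * a1⁻¹ * b1 * a1)) *
          (a2⁻¹*b2⁻¹*a2*b2)⁻¹ *
          ((b2*b1⁻¹*a1⁻¹*b1*a1) * (b2⁻¹ * a2⁻¹ * b2 * a2 * (b1⁻¹ * a1⁻¹ * b1 * a1))⁻¹ *
            (b2*b1⁻¹*a1⁻¹*b1*a1)⁻¹) * b2)
      · group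
      · rw [grel]; group
  intro g
  exact DFunLike.congr_fun h g

/-- `φ` as an automorphism. -/
def phiAut : MulAut Gamma2 where
  toFun := phiH
  invFun := phiH
  left_inv := phiH_phiH
  right_inv := phiH_phiH
  map_mul' := _root_.map_mul phiH

lemma phiAut_apply (g : Gamma2) : phiAut g = phiH g := rfl

/-- Build a homomorphism from `C₂` out of an element of order dividing two. -/
def homZMod2 {H : Type*} [Group H] (h : H) (hh : h * h = 1) :
    Multiplicative (ZMod 2) →* H where
  toFun t := h ^ (Multiplicative.toAdd t).val
  map_one' := pow_zero h
  map_mul' a b := by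
    have hcase : ∀ z : ZMod 2, z = 0 ∨ z = 1 := by decide
    have key : ∀ u v : ZMod 2, h ^ (u + v).val = h ^ u.val * h ^ v.val := by
      intro u v
      rcases hcase u with rfl | rfl <;> rcases hcase v with rfl | rfl
      · show h ^ 0 = h ^ 0 * h ^ 0; simp
      · show h ^ 1 = h ^ 0 * h ^ 1; simp
      · show h ^ 1 = h ^ 1 * h ^ 0; simp
      · show h ^ 0 = h ^ 1 * h ^ 1; simpa using hh.symm
    exact key _ _

/-- The generator of `C₂`. -/
abbrev σg : Multiplicative (ZMod 2) := Multiplicative.ofAdd 1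

lemma homZMod2_σg {H : Type*} [Group H] (h : H) (hh : h * h = 1) :
    homZMod2 h hh σg = h := by
  show h ^ 1 = h
  exact pow_one h

lemma phiAut_sq : phiAut * phiAut = 1 := by
  ext g
  exact phiH_phiH g

/-- The action of `C₂` on `Γ₂` through `φ`. -/
def mu2 : Multiplicative (ZMod 2) →* MulAut Gamma2 := homZMod2 phiAut phiAut_sq

lemma mu2_σg : mu2 σg = phiAut := homZMod2_σg _ _

lemma σg_mul : σg * σg = (1 : Multiplicative (ZMod 2)) := by decide

/-- The semidirect product `Γ₂ ⋊ C₂`. -/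
abbrev SDP : Type := SemidirectProduct Gamma2 (Multiplicative (ZMod 2)) mu2

/-- The `Γ₂`-parts of the images of the `qᵢ`. -/
def cword : Fin 6 → Gamma2
  | 0 => a1⁻¹
  | 1 => 1
  | 2 => b1⁻¹
  | 3 => a2⁻¹ * xw⁻¹
  | 4 => xw⁻¹
  | 5 => b2⁻¹ * xw⁻¹

lemma hci : ∀ i : Fin 6, cword i * phiH (cword i) = 1 := by
  have hx : ∀ c : Gamma2, (c * xw⁻¹) * phiH (c * xw⁻¹) = 1 →
      True := fun _ _ => trivial
  intro i
  fin_cases i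
  · show a1⁻¹ * phiH a1⁻¹ = 1
    rw [_root_.map_inv, phiH_a1, inv_inv, inv_mul_cancel]
  · show (1 : Gamma2) * phiH 1 = 1
    simp
  · show b1⁻¹ * phiH b1⁻¹ = 1
    rw [_root_.map_inv, phiH_b1, inv_inv, inv_mul_cancel]
  · show (a2⁻¹ * xw⁻¹) * phiH (a2⁻¹ * xw⁻¹) = 1
    simp only [xw, _root_.map_mul, _root_.map_inv, phiH_a1, phiH_b1, phiH_a2, phiH_b2]
    trans ((b1⁻¹*a1⁻¹*b1*a1) * (b2⁻¹ * a2⁻¹ * b2 * a2 * (b1⁻¹ * a1⁻¹ * b1 * a1))⁻¹ *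
        (b1⁻¹*a1⁻¹*b1*a1)⁻¹)
    · group
    · rw [grel]; group
  · show xw⁻¹ * phiH xw⁻¹ = 1
    simp only [xw, _root_.map_mul, _root_.map_inv, phiH_a1, phiH_b1, phiH_a2, phiH_b2]
    trans ((b1⁻¹*a1⁻¹*b1*a1) * (b2⁻¹ * a2⁻¹ * b2 * a2 * (b1⁻¹ * a1⁻¹ * b1 * a1))⁻¹ *
        (b1⁻¹*a1⁻¹*b1*a1)⁻¹)
    · group
    · rw [grel]; group
  · show (b2⁻¹ * xw⁻¹) * phiH (b2⁻¹ * xw⁻¹) = 1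
    simp only [xw, _root_.map_mul, _root_.map_inv, phiH_a1, phiH_b1, phiH_a2, phiH_b2]
    trans ((b1⁻¹*a1⁻¹*b1*a1) * (b2⁻¹ * a2⁻¹ * b2 * a2 * (b1⁻¹ * a1⁻¹ * b1 * a1))⁻¹ *
        (b1⁻¹*a1⁻¹*b1*a1)⁻¹)
    · group
    · rw [grel]; group

/-- The images of the `qᵢ` in `Γ₂ ⋊ C₂`. -/
def qMap (i : Fin 6) : SDP := ⟨cword i, σg⟩

lemma qMap_mul (i j : Fin 6) : qMap i * qMap j = ⟨cword i * phiH (cword j), 1⟩ := by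
  show (⟨cword i, σg⟩ : SDP) * ⟨cword j, σg⟩ = _
  rw [SemidirectProduct.mul_def, mu2_σg, σg_mul]
  rfl

lemma mk_one_mul (n m : Gamma2) : (⟨n, 1⟩ : SDP) * ⟨m, 1⟩ = ⟨n * m, 1⟩ := by
  rw [SemidirectProduct.mul_def, _root_.map_one]
  simp

lemma qMap_sq (i : Fin 6) : qMap i * qMap i = 1 := by
  rw [qMap_mul, hci i]
  rfl

lemma hw : (cword 0 * phiH (cword 1)) * ((cword 2 * phiH (cword 3)) *
    (cword 4 * phiH (cword 5))) = 1 := by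
  show (a1⁻¹ * phiH 1) * ((b1⁻¹ * phiH (a2⁻¹ * xw⁻¹)) * (xw⁻¹ * phiH (b2⁻¹ * xw⁻¹))) = 1
  simp only [xw, _root_.map_mul, _root_.map_inv, _root_.map_one, phiH_a1, phiH_b1, phiH_a2,
    phiH_b2]
  trans ((b2⁻¹*b1⁻¹*a1⁻¹*b1*a1) * (b2⁻¹ * a2⁻¹ * b2 * a2 * (b1⁻¹ * a1⁻¹ * b1 * a1))⁻¹ *
      (b2⁻¹*b1⁻¹*a1⁻¹*b1*a1)⁻¹ *
      ((b1⁻¹*a1⁻¹*b1*a1) * (b2⁻¹ * a2⁻¹ * b2 * a2 * (b1⁻¹ * a1⁻¹ * b1 * a1))⁻¹ *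
        (b1⁻¹*a1⁻¹*b1*a1)⁻¹))
  · group
  · rw [grel]; group

lemma psi_lift_rel : ∀ r ∈ pentagonRels, FreeGroup.lift qMap r = 1 := by
  intro r hr
  rcases hr with ⟨i, rfl⟩ | rfl
  · rw [_root_.map_mul, FreeGroup.lift_apply_of]
    exact qMap_sq i
  · rw [show List.finRange 6 = [0, 1, 2, 3, 4, 5] from by decide]
    simp only [List.map_cons, List.map_nil, List.prod_cons, List.prod_nil, mul_one,
      _root_.map_mul, FreeGroup.lift_apply_of]
    rw [show qMap 0 * (qMap 1 * (qMap 2 * (qMap 3 * (qMap 4 * qMap 5)))) =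
        (qMap 0 * qMap 1) * ((qMap 2 * qMap 3) * (qMap 4 * qMap 5)) from by group]
    rw [qMap_mul, qMap_mul, qMap_mul, mk_one_mul, mk_one_mul, hw]
    rfl

/-- The homomorphism `ψ : Γ → Γ₂ ⋊ C₂`. -/
def psiH : GammaP →* SDP := PresentedGroup.toGroup psi_lift_rel

lemma psiH_q (i : Fin 6) : psiH (qgen i) = qMap i := PresentedGroup.toGroup.of psi_lift_rel

/-! #### Values of `iota` on the generators -/

lemma iota_a1 : iota a1 = qgen 1 * qgen 0 := by
  unfold iota; exact PresentedGroup.toGroup.of _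
lemma iota_b1 : iota b1 = qgen 1 * qgen 2 := by
  unfold iota; exact PresentedGroup.toGroup.of _
lemma iota_a2 : iota a2 = qgen 4 * qgen 3 := by
  unfold iota; exact PresentedGroup.toGroup.of _
lemma iota_b2 : iota b2 = qgen 4 * qgen 5 := by
  unfold iota; exact PresentedGroup.toGroup.of _

/-! #### Rewriting machinery in `Γ` -/

lemma hqinv (i : Fin 6) : (qgen i)⁻¹ = qgen i :=
  inv_eq_of_mul_eq_one_right (qgen_mul_self i)

lemma qk (i : Fin 6) (t : GammaP) : qgen i * (qgen i * t) = t := by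
  rw [← mul_assoc, qgen_mul_self, one_mul]

private lemma rot_shift {G : Type*} [Group G] {y0 y1 y2 y3 y4 y5 : G}
    (K : ∀ t, y0 * (y1 * (y2 * (y3 * (y4 * (y5 * t))))) = t) (t : G) :
    y1 * (y2 * (y3 * (y4 * (y5 * (y0 * t))))) = t :=
  mul_left_cancel (K (y0 * t))

lemma kf0 (t : GammaP) :
    qgen 0 * (qgen 1 * (qgen 2 * (qgen 3 * (qgen 4 * (qgen 5 * t))))) = t := by
  calc qgen 0 * (qgen 1 * (qgen 2 * (qgen 3 * (qgen 4 * (qgen 5 * t)))))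
      = (qgen 0 * (qgen 1 * (qgen 2 * (qgen 3 * (qgen 4 * qgen 5))))) * t := by group
    _ = t := by rw [qgen_prod, one_mul]

lemma kf1 : ∀ t : GammaP,
    qgen 1 * (qgen 2 * (qgen 3 * (qgen 4 * (qgen 5 * (qgen 0 * t))))) = t := rot_shift kf0
lemma kf2 : ∀ t : GammaP,
    qgen 2 * (qgen 3 * (qgen 4 * (qgen 5 * (qgen 0 * (qgen 1 * t))))) = t := rot_shift kf1
lemma kf3 : ∀ t : GammaP,
    qgen 3 * (qgen 4 * (qgen 5 * (qgen 0 * (qgen 1 * (qgen 2 * t))))) = t := rot_shift kf2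
lemma kf4 : ∀ t : GammaP,
    qgen 4 * (qgen 5 * (qgen 0 * (qgen 1 * (qgen 2 * (qgen 3 * t))))) = t := rot_shift kf3
lemma kf5 : ∀ t : GammaP,
    qgen 5 * (qgen 0 * (qgen 1 * (qgen 2 * (qgen 3 * (qgen 4 * t))))) = t := rot_shift kf4

lemma qgen_prod_rev : qgen 5 * (qgen 4 * (qgen 3 * (qgen 2 * (qgen 1 * qgen 0)))) = 1 := by
  have h := congrArg (·⁻¹) qgen_prod
  simpa [_root_.mul_inv_rev, hqinv, mul_assoc] using h

lemma kr0 (t : GammaP) :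
    qgen 5 * (qgen 4 * (qgen 3 * (qgen 2 * (qgen 1 * (qgen 0 * t))))) = t := by
  calc qgen 5 * (qgen 4 * (qgen 3 * (qgen 2 * (qgen 1 * (qgen 0 * t)))))
      = (qgen 5 * (qgen 4 * (qgen 3 * (qgen 2 * (qgen 1 * qgen 0))))) * t := by group
    _ = t := by rw [qgen_prod_rev, one_mul]

lemma kr1 : ∀ t : GammaP,
    qgen 4 * (qgen 3 * (qgen 2 * (qgen 1 * (qgen 0 * (qgen 5 * t))))) = t := rot_shift kr0
lemma kr2 : ∀ t : GammaP,
    qgen 3 * (qgen 2 * (qgen 1 * (qgen 0 * (qgen 5 * (qgen 4 * t))))) = t := rot_shift kr1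
lemma kr3 : ∀ t : GammaP,
    qgen 2 * (qgen 1 * (qgen 0 * (qgen 5 * (qgen 4 * (qgen 3 * t))))) = t := rot_shift kr2
lemma kr4 : ∀ t : GammaP,
    qgen 1 * (qgen 0 * (qgen 5 * (qgen 4 * (qgen 3 * (qgen 2 * t))))) = t := rot_shift kr3
lemma kr5 : ∀ t : GammaP,
    qgen 0 * (qgen 5 * (qgen 4 * (qgen 3 * (qgen 2 * (qgen 1 * t))))) = t := rot_shift kr4

lemma bf0 : qgen 0 * (qgen 1 * (qgen 2 * (qgen 3 * (qgen 4 * qgen 5)))) = 1 := by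
  have := kf0 1; simpa using this
lemma bf1 : qgen 1 * (qgen 2 * (qgen 3 * (qgen 4 * (qgen 5 * qgen 0)))) = 1 := by
  have := kf1 1; simpa using this
lemma bf2 : qgen 2 * (qgen 3 * (qgen 4 * (qgen 5 * (qgen 0 * qgen 1)))) = 1 := by
  have := kf2 1; simpa using this
lemma bf3 : qgen 3 * (qgen 4 * (qgen 5 * (qgen 0 * (qgen 1 * qgen 2)))) = 1 := by
  have := kf3 1; simpa using this
lemma bf4 : qgen 4 * (qgen 5 * (qgen 0 * (qgen 1 * (qgen 2 * qgen 3)))) = 1 := by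
  have := kf4 1; simpa using this
lemma bf5 : qgen 5 * (qgen 0 * (qgen 1 * (qgen 2 * (qgen 3 * qgen 4)))) = 1 := by
  have := kf5 1; simpa using this
lemma br0 : qgen 5 * (qgen 4 * (qgen 3 * (qgen 2 * (qgen 1 * qgen 0)))) = 1 := qgen_prod_rev
lemma br1 : qgen 4 * (qgen 3 * (qgen 2 * (qgen 1 * (qgen 0 * qgen 5)))) = 1 := by
  have := kr1 1; simpa using this
lemma br2 : qgen 3 * (qgen 2 * (qgen 1 * (qgen 0 * (qgen 5 * qgen 4)))) = 1 := by
  have := kr2 1; simpa using this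
lemma br3 : qgen 2 * (qgen 1 * (qgen 0 * (qgen 5 * (qgen 4 * qgen 3)))) = 1 := by
  have := kr3 1; simpa using this
lemma br4 : qgen 1 * (qgen 0 * (qgen 5 * (qgen 4 * (qgen 3 * qgen 2)))) = 1 := by
  have := kr4 1; simpa using this
lemma br5 : qgen 0 * (qgen 5 * (qgen 4 * (qgen 3 * (qgen 2 * qgen 1)))) = 1 := by
  have := kr5 1; simpa using this

/-! #### The compatibility of `φ` with conjugation by `q₂` -/

/-- The homomorphism `C₂ → Γ` sending the generator to `q₂`. -/
def f2H : Multiplicative (ZMod 2) →* GammaP := homZMod2 (qgen 1) (qgen_mul_self 1)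

lemma zcases : ∀ z : Multiplicative (ZMod 2), z = 1 ∨ z = σg := by decide

lemma compat : ∀ t : Multiplicative (ZMod 2),
    iota.comp ((mu2 t).toMonoidHom) = (MulAut.conj (f2H t)).toMonoidHom.comp iota := by
  intro t
  rcases zcases t with rfl | rfl
  · rw [_root_.map_one, _root_.map_one, _root_.map_one]
    rfl
  · rw [mu2_σg, show f2H σg = qgen 1 from homZMod2_σg _ _]
    apply PresentedGroup.ext
    rintro ⟨i, b⟩
    fin_cases i <;> cases b
    · show iota (phiH a1) = qgen 1 * iota a1 * (qgen 1)⁻¹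
      rw [phiH_a1, _root_.map_inv, iota_a1, ← mul_inv_eq_one]
      simp only [_root_.mul_inv_rev, hqinv, mul_assoc, qk, qgen_mul_self, one_mul, mul_one, inv_one,
        kf0, kf1, kf2, kf3, kf4, kf5, kr0, kr1, kr2, kr3, kr4, kr5,
        bf0, bf1, bf2, bf3, bf4, bf5, br0, br1, br2, br3, br4, br5]
    · show iota (phiH b1) = qgen 1 * iota b1 * (qgen 1)⁻¹
      rw [phiH_b1, _root_.map_inv, iota_b1, ← mul_inv_eq_one]
      simp only [_root_.mul_inv_rev, hqinv, mul_assoc, qk, qgen_mul_self, one_mul, mul_one, inv_one,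
        kf0, kf1, kf2, kf3, kf4, kf5, kr0, kr1, kr2, kr3, kr4, kr5,
        bf0, bf1, bf2, bf3, bf4, bf5, br0, br1, br2, br3, br4, br5]
    · show iota (phiH a2) = qgen 1 * iota a2 * (qgen 1)⁻¹
      rw [phiH_a2]
      simp only [xw, _root_.map_mul, _root_.map_inv, iota_a1, iota_b1, iota_a2, iota_b2]
      rw [← mul_inv_eq_one]
      simp only [_root_.mul_inv_rev, hqinv, mul_assoc, qk, qgen_mul_self, one_mul, mul_one, inv_one,
        kf0, kf1, kf2, kf3, kf4, kf5, kr0, kr1, kr2, kr3, kr4, kr5,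
        bf0, bf1, bf2, bf3, bf4, bf5, br0, br1, br2, br3, br4, br5]
    · show iota (phiH b2) = qgen 1 * iota b2 * (qgen 1)⁻¹
      rw [phiH_b2]
      simp only [xw, _root_.map_mul, _root_.map_inv, iota_a1, iota_b1, iota_a2, iota_b2]
      rw [← mul_inv_eq_one]
      simp only [_root_.mul_inv_rev, hqinv, mul_assoc, qk, qgen_mul_self, one_mul, mul_one, inv_one,
        kf0, kf1, kf2, kf3, kf4, kf5, kr0, kr1, kr2, kr3, kr4, kr5,
        bf0, bf1, bf2, bf3, bf4, bf5, br0, br1, br2, br3, br4, br5]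

/-- The homomorphism `θ : Γ₂ ⋊ C₂ → Γ`. -/
def thetaH : SDP →* GammaP := SemidirectProduct.lift iota f2H compat

lemma theta_psi : ∀ g : GammaP, thetaH (psiH g) = g := by
  have h : thetaH.comp psiH = MonoidHom.id GammaP := by
    apply PresentedGroup.ext
    intro i
    show thetaH (psiH (qgen i)) = qgen i
    rw [psiH_q,
      show (qMap i : SDP) = SemidirectProduct.inl (cword i) * SemidirectProduct.inr σg from
        SemidirectProduct.mk_eq_inl_mul_inr _ _,
      _root_.map_mul,
      show thetaH (SemidirectProduct.inl (cword i)) = iota (cword i) from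
        SemidirectProduct.lift_inl _ _ _ _,
      show thetaH (SemidirectProduct.inr σg) = f2H σg from
        SemidirectProduct.lift_inr _ _ _ _,
      show f2H σg = qgen 1 from homZMod2_σg _ _]
    fin_cases i
    · show iota a1⁻¹ * qgen 1 = qgen 0
      rw [_root_.map_inv, iota_a1, ← mul_inv_eq_one]
      simp only [_root_.mul_inv_rev, hqinv, mul_assoc, qk, qgen_mul_self, one_mul, mul_one, inv_one,
        kf0, kf1, kf2, kf3, kf4, kf5, kr0, kr1, kr2, kr3, kr4, kr5,
        bf0, bf1, bf2, bf3, bf4, bf5, br0, br1, br2, br3, br4, br5]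
    · show iota 1 * qgen 1 = qgen 1
      rw [_root_.map_one, one_mul]
    · show iota b1⁻¹ * qgen 1 = qgen 2
      rw [_root_.map_inv, iota_b1, ← mul_inv_eq_one]
      simp only [_root_.mul_inv_rev, hqinv, mul_assoc, qk, qgen_mul_self, one_mul, mul_one, inv_one,
        kf0, kf1, kf2, kf3, kf4, kf5, kr0, kr1, kr2, kr3, kr4, kr5,
        bf0, bf1, bf2, bf3, bf4, bf5, br0, br1, br2, br3, br4, br5]
    · show iota (a2⁻¹ * xw⁻¹) * qgen 1 = qgen 3
      simp only [xw, _root_.map_mul, _root_.map_inv, iota_a1, iota_b1, iota_a2, iota_b2]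
      rw [← mul_inv_eq_one]
      simp only [_root_.mul_inv_rev, hqinv, mul_assoc, qk, qgen_mul_self, one_mul, mul_one, inv_one,
        kf0, kf1, kf2, kf3, kf4, kf5, kr0, kr1, kr2, kr3, kr4, kr5,
        bf0, bf1, bf2, bf3, bf4, bf5, br0, br1, br2, br3, br4, br5]
    · show iota xw⁻¹ * qgen 1 = qgen 4
      simp only [xw, _root_.map_mul, _root_.map_inv, iota_a1, iota_b1, iota_a2, iota_b2]
      rw [← mul_inv_eq_one]
      simp only [_root_.mul_inv_rev, hqinv, mul_assoc, qk, qgen_mul_self, one_mul, mul_one, inv_one,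
        kf0, kf1, kf2, kf3, kf4, kf5, kr0, kr1, kr2, kr3, kr4, kr5,
        bf0, bf1, bf2, bf3, bf4, bf5, br0, br1, br2, br3, br4, br5]
    · show iota (b2⁻¹ * xw⁻¹) * qgen 1 = qgen 5
      simp only [xw, _root_.map_mul, _root_.map_inv, iota_a1, iota_b1, iota_a2, iota_b2]
      rw [← mul_inv_eq_one]
      simp only [_root_.mul_inv_rev, hqinv, mul_assoc, qk, qgen_mul_self, one_mul, mul_one, inv_one,
        kf0, kf1, kf2, kf3, kf4, kf5, kr0, kr1, kr2, kr3, kr4, kr5,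
        bf0, bf1, bf2, bf3, bf4, bf5, br0, br1, br2, br3, br4, br5]
  intro g
  exact DFunLike.congr_fun h g

lemma psi_iota : ∀ g : Gamma2, psiH (iota g) = SemidirectProduct.inl g := by
  have h : psiH.comp iota = (SemidirectProduct.inl : Gamma2 →* SDP) := by
    apply PresentedGroup.ext
    rintro ⟨i, b⟩
    fin_cases i <;> cases b
    · show psiH (iota a1) = SemidirectProduct.inl a1
      rw [iota_a1, _root_.map_mul, psiH_q, psiH_q, qMap_mul,
        show cword 1 * phiH (cword 0) = a1 from by
          show (1 : Gamma2) * phiH a1⁻¹ = a1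
          rw [one_mul, _root_.map_inv, phiH_a1, inv_inv]]
      rfl
    · show psiH (iota b1) = SemidirectProduct.inl b1
      rw [iota_b1, _root_.map_mul, psiH_q, psiH_q, qMap_mul,
        show cword 1 * phiH (cword 2) = b1 from by
          show (1 : Gamma2) * phiH b1⁻¹ = b1
          rw [one_mul, _root_.map_inv, phiH_b1, inv_inv]]
      rfl
    · show psiH (iota a2) = SemidirectProduct.inl a2
      rw [iota_a2, _root_.map_mul, psiH_q, psiH_q, qMap_mul,
        show cword 4 * phiH (cword 3) = a2 from by
          show xw⁻¹ * phiH (a2⁻¹ * xw⁻¹) = a2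
          simp only [xw, _root_.map_mul, _root_.map_inv, phiH_a1, phiH_b1, phiH_a2, phiH_b2]
          trans ((a2*b1⁻¹*a1⁻¹*b1*a1) * (b2⁻¹ * a2⁻¹ * b2 * a2 * (b1⁻¹ * a1⁻¹ * b1 * a1))⁻¹ *
              (a2*b1⁻¹*a1⁻¹*b1*a1)⁻¹ * a2)
          · group
          · rw [grel]; group]
      rfl
    · show psiH (iota b2) = SemidirectProduct.inl b2
      rw [iota_b2, _root_.map_mul, psiH_q, psiH_q, qMap_mul,
        show cword 4 * phiH (cword 5) = b2 from by
          show xw⁻¹ * phiH (b2⁻¹ * xw⁻¹) = b2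
          simp only [xw, _root_.map_mul, _root_.map_inv, phiH_a1, phiH_b1, phiH_a2, phiH_b2]
          trans ((b2*b1⁻¹*a1⁻¹*b1*a1) * (b2⁻¹ * a2⁻¹ * b2 * a2 * (b1⁻¹ * a1⁻¹ * b1 * a1))⁻¹ *
              (b2*b1⁻¹*a1⁻¹*b1*a1)⁻¹ * b2)
          · group
          · rw [grel]; group]
      rfl
  intro g
  exact DFunLike.congr_fun h g


end Statement6Aux

/-- `ι : Γ₂ → Γ` is a well-defined homomorphism with the prescribed values on
generators; it is injective and its image has index 2. -/
theorem statement6 :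
    iota a1 = qgen 1 * qgen 0 ∧ iota b1 = qgen 1 * qgen 2 ∧
    iota a2 = qgen 4 * qgen 3 ∧ iota b2 = qgen 4 * qgen 5 ∧
    Function.Injective iota ∧ iota.range.index = 2 := by
  refine ⟨iota_a1, iota_b1, iota_a2, iota_b2, ?_, ?_⟩
  · intro g g' hgg
    have e : SemidirectProduct.inl (φ := mu2) g = SemidirectProduct.inl g' := by
      rw [← psi_iota g, ← psi_iota g', hgg]
    exact SemidirectProduct.inl_injective e
  · have hker : iota.range = (SemidirectProduct.rightHom.comp psiH).ker := by
      apply le_antisymm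
      · rintro x ⟨g, rfl⟩
        show SemidirectProduct.rightHom (psiH (iota g)) = 1
        rw [psi_iota, SemidirectProduct.rightHom_inl]
      · intro g hg
        have hr : (psiH g).right = 1 := hg
        have h1 : psiH g = SemidirectProduct.inl ((psiH g).left) := by
          conv_lhs => rw [← SemidirectProduct.inl_left_mul_inr_right (psiH g)]
          rw [hr, _root_.map_one, mul_one]
        refine ⟨(psiH g).left, ?_⟩
        calc iota ((psiH g).left)
            = thetaH (SemidirectProduct.inl ((psiH g).left)) :=
              (show thetaH (SemidirectProduct.inl ((psiH g).left)) = iota ((psiH g).left) from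
                SemidirectProduct.lift_inl _ _ _ _).symm
          _ = thetaH (psiH g) := by rw [← h1]
          _ = g := theta_psi g
    rw [hker, Subgroup.index_ker]
    have hsurj : Function.Surjective
        (SemidirectProduct.rightHom.comp psiH : GammaP →* Multiplicative (ZMod 2)) := by
      intro t
      rcases zcases t with rfl | rfl
      · exact ⟨1, _root_.map_one _⟩
      · exact ⟨qgen 1, by
          show SemidirectProduct.rightHom (psiH (qgen 1)) = σg
          rw [psiH_q]; rfl⟩
    rw [MonoidHom.range_eq_top.mpr hsurj, Subgroup.card_top]
    simp [Nat.card_eq_fintype_card]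
end
end

section
/- Let ρ' : Γ → PSL(2,ℂ) be a group homomorphism such that ρ'(qᵢ) = 1 for at least two distinct indices i ∈ {1,…,6}. Then the homomorphism ρ' ∘ ι : Γ₂ → PSL(2,ℂ) is elementary. -/
/- Common setup: PSL(2,ℂ), its action on ℙ¹(ℂ), loxodromic/parabolic/elliptic elements,
elementary subgroups, surface groups, the pentagon group Γ and the embedding ι. -/

noncomputable section

open Matrix

/-! ### auxiliary machinery for statement8 -/

section Statement8Aux

abbrev Mat2 : Type := Matrix (Fin 2) (Fin 2) ℂ

/-- commute or anticommute -/
def CAmat (t N : Mat2) : Prop := t * N = N * t ∨ t * N = -(N * t)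

lemma CAmat_one (N : Mat2) : CAmat 1 N := Or.inl (by simp)

lemma CAmat_smul_one (γ : ℂ) (N : Mat2) : CAmat (γ • 1) N :=
  Or.inl (by simp [smul_mul_assoc, mul_smul_comm])

lemma CAmat_smul (γ : ℂ) {t N : Mat2} (h : CAmat t N) : CAmat (γ • t) N := by
  rcases h with h | h
  · exact Or.inl (by rw [smul_mul_assoc, mul_smul_comm, h])
  · exact Or.inr (by rw [smul_mul_assoc, mul_smul_comm, h, smul_neg])

lemma CAmat_neg {t N : Mat2} (h : CAmat t N) : CAmat (-t) N := by
  rcases h with h | h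
  · exact Or.inl (by rw [neg_mul, mul_neg, h])
  · exact Or.inr (by rw [neg_mul, mul_neg, h, neg_neg])

lemma CAmat_mul {x y N : Mat2} (hx : CAmat x N) (hy : CAmat y N) : CAmat (x * y) N := by
  rcases hx with hx | hx <;> rcases hy with hy | hy
  · exact Or.inl (by rw [mul_assoc, hy, ← mul_assoc, hx, mul_assoc])
  · exact Or.inr (by rw [mul_assoc, hy, mul_neg, ← mul_assoc, hx, mul_assoc])
  · exact Or.inr (by rw [mul_assoc, hy, ← mul_assoc, hx, neg_mul, mul_assoc])
  · exact Or.inl (by rw [mul_assoc, hy, mul_neg, ← mul_assoc, hx, neg_mul, neg_neg, mul_assoc])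

lemma CAmat_of_inv {A B N : Mat2} (hAB : A * B = 1) (hBA : B * A = 1) (h : CAmat A N) :
    CAmat B N := by
  rcases h with h | h
  · refine Or.inl ?_
    calc B * N = B * N * (A * B) := by rw [hAB, mul_one]
      _ = B * (N * A) * B := by noncomm_ring
      _ = B * (A * N) * B := by rw [h]
      _ = N * B := by rw [← mul_assoc, hBA, one_mul]
  · refine Or.inr ?_
    calc B * N = B * N * (A * B) := by rw [hAB, mul_one]
      _ = B * (N * A) * B := by noncomm_ring
      _ = B * (-(A * N)) * B := by rw [h, neg_neg]
      _ = -(B * A * (N * B)) := by noncomm_ring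
      _ = -(N * B) := by rw [hBA, one_mul]

/-- key identity for trace zero 2x2 matrices -/
lemma tr0_mul_add_mul {a b : Mat2} (ha : a.trace = 0) (hb : b.trace = 0) :
    a * b + b * a = (a * b).trace • (1 : Mat2) := by
  rw [Matrix.trace_fin_two] at ha hb
  have ha' : a 1 1 = -(a 0 0) := by linear_combination ha
  have hb' : b 1 1 = -(b 0 0) := by linear_combination hb
  ext i j
  fin_cases i <;> fin_cases j <;>
    simp [Matrix.mul_apply, Fin.sum_univ_two, Matrix.trace_fin_two, Matrix.one_apply, ha', hb'] <;>
    ring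

lemma anticomm_of_tr0 {a b : Mat2} (ha : a.trace = 0) (hb : b.trace = 0)
    (h : (a * b).trace = 0) : a * b = -(b * a) := by
  have h2 := tr0_mul_add_mul ha hb
  rw [h, zero_smul] at h2
  exact eq_neg_of_add_eq_zero_left h2

lemma sq_eq_neg_one {a : Mat2} (ha : a.trace = 0) (hd : a.det = 1) : a * a = -1 := by
  rw [Matrix.trace_fin_two] at ha
  rw [Matrix.det_fin_two] at hd
  ext i j
  fin_cases i <;> fin_cases j <;>
    simp [Matrix.mul_apply, Fin.sum_univ_two, Matrix.one_apply]
  · linear_combination a 0 0 * ha - hd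
  · linear_combination a 0 1 * ha
  · linear_combination a 1 0 * ha
  · linear_combination a 1 1 * ha - hd

lemma mat_ne_zero_of_sq {a : Mat2} (h : a * a = -1) : a ≠ 0 := by
  intro h0
  rw [h0, mul_zero] at h
  have := congrFun (congrFun h 0) 0
  simp [Matrix.one_apply] at this

def E12 : Mat2 := !![0,1;0,0]

lemma E12_ne : E12 ≠ 0 := by
  intro h
  have := congrFun (congrFun h 0) 1
  simp [E12] at this

lemma E12_tr : E12.trace = 0 := by simp [E12, Matrix.trace_fin_two]

/-- per-element hypothesis -/
def HypM (t : Mat2) : Prop := t = 1 ∨ (t.trace = 0 ∧ t * t = -1)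

lemma brkt_antiA {x y : Mat2} (hx2 : x * x = -1) :
    x * (x * y - y * x) = -((x * y - y * x) * x) := by
  have h : x * (x * y - y * x) + (x * y - y * x) * x = (x * x) * y - y * (x * x) := by
    noncomm_ring
  rw [hx2] at h
  exact eq_neg_of_add_eq_zero_left (by rw [h]; noncomm_ring)

lemma brkt_antiB {x y : Mat2} (hy2 : y * y = -1) :
    y * (x * y - y * x) = -((x * y - y * x) * y) := by
  have h : y * (x * y - y * x) + (x * y - y * x) * y = x * (y * y) - (y * y) * x := by
    noncomm_ring
  rw [hy2] at h
  exact eq_neg_of_add_eq_zero_left (by rw [h]; noncomm_ring)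

lemma tr_cyc (x y z : Mat2) : (x * (y * z)).trace = (z * (x * y)).trace := by
  rw [← mul_assoc, Matrix.trace_mul_comm]

lemma lem2 {a b : Mat2} {γ : ℂ} (hγ : γ ≠ 0) (hp : a * b = γ • 1)
    (Ha : HypM a) (Hb : HypM b) :
    ∃ N : Mat2, N ≠ 0 ∧ N.trace = 0 ∧ CAmat a N ∧ CAmat b N := by
  rcases Ha with rfl | ⟨ha, ha2⟩
  · rw [one_mul] at hp
    subst hp
    exact ⟨E12, E12_ne, E12_tr, CAmat_one _, CAmat_smul_one _ _⟩
  · rcases Hb with rfl | ⟨hb, hb2⟩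
    · rw [mul_one] at hp
      subst hp
      exact ⟨E12, E12_ne, E12_tr, CAmat_smul_one _ _, CAmat_one _⟩
    · have h1 : b = -(γ • a) := by
        have h := congrArg (fun m => a * m) hp
        simp only [← mul_assoc] at h
        simp only [ha2, neg_one_mul, neg_mul, mul_smul_comm, mul_one, one_mul] at h
        exact neg_eq_iff_eq_neg.mp h
      refine ⟨a, mat_ne_zero_of_sq ha2, ha, Or.inl rfl, ?_⟩
      rw [h1]
      exact CAmat_neg (CAmat_smul _ (Or.inl rfl))

lemma lem3 {a b c : Mat2} {γ : ℂ} (hγ : γ ≠ 0) (hp : a * (b * c) = γ • 1)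
    (Ha : HypM a) (Hb : HypM b) (Hc : HypM c) :
    ∃ N : Mat2, N ≠ 0 ∧ N.trace = 0 ∧ CAmat a N ∧ CAmat b N ∧ CAmat c N := by
  rcases Ha with rfl | ⟨ha, ha2⟩
  · rw [one_mul] at hp
    obtain ⟨N, h1, h2, h3, h4⟩ := lem2 hγ hp Hb Hc
    exact ⟨N, h1, h2, CAmat_one _, h3, h4⟩
  rcases Hb with rfl | ⟨hb, hb2⟩
  · rw [one_mul] at hp
    obtain ⟨N, h1, h2, h3, h4⟩ := lem2 hγ hp (Or.inr ⟨ha, ha2⟩) Hc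
    exact ⟨N, h1, h2, h3, CAmat_one _, h4⟩
  rcases Hc with rfl | ⟨hc, hc2⟩
  · rw [mul_one] at hp
    obtain ⟨N, h1, h2, h3, h4⟩ := lem2 hγ hp (Or.inr ⟨ha, ha2⟩) (Or.inr ⟨hb, hb2⟩)
    exact ⟨N, h1, h2, h3, h4, CAmat_one _⟩
  · have h1 : b * c = -(γ • a) := by
      have h := congrArg (fun m => a * m) hp
      simp only [← mul_assoc] at h
      simp only [ha2, neg_one_mul, neg_mul, mul_smul_comm, mul_one, one_mul, mul_assoc] at h
      exact neg_eq_iff_eq_neg.mp h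
    have h2 : c = γ • (b * a) := by
      have h := congrArg (fun m => b * m) h1
      simp only [← mul_assoc] at h
      simp only [hb2, neg_one_mul, neg_mul, mul_neg, one_mul, mul_smul_comm, mul_assoc] at h
      exact neg_inj.mp h
    have htrba : (b * a).trace = 0 := by
      have h := congrArg Matrix.trace h2
      rw [hc, Matrix.trace_smul, smul_eq_mul] at h
      exact (mul_eq_zero.mp h.symm).resolve_left hγ
    have hab : a * b = -(b * a) :=
      anticomm_of_tr0 ha hb (by rw [Matrix.trace_mul_comm]; exact htrba)
    have e1 : b * a * a = -b := by rw [mul_assoc, ha2, mul_neg_one]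
    have e2 : a * (b * a) = b := by
      rw [← mul_assoc, hab, neg_mul, mul_assoc, ha2, mul_neg_one, neg_neg]
    refine ⟨a, mat_ne_zero_of_sq ha2, ha, Or.inl rfl, Or.inr ?_, Or.inr ?_⟩
    · rw [hab, neg_neg]
    · rw [h2, smul_mul_assoc, e1, mul_smul_comm, e2, smul_neg]

lemma lem4 {a b c d : Mat2} {γ : ℂ} (hγ : γ ≠ 0) (hp : a * (b * (c * d)) = γ • 1)
    (Ha : HypM a) (Hb : HypM b) (Hc : HypM c) (Hd : HypM d) :
    ∃ N : Mat2, N ≠ 0 ∧ N.trace = 0 ∧ CAmat a N ∧ CAmat b N ∧ CAmat c N ∧ CAmat d N := by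
  rcases Ha with rfl | ⟨ha, ha2⟩
  · rw [one_mul] at hp
    obtain ⟨N, h1, h2, h3, h4, h5⟩ := lem3 hγ hp Hb Hc Hd
    exact ⟨N, h1, h2, CAmat_one _, h3, h4, h5⟩
  rcases Hb with rfl | ⟨hb, hb2⟩
  · rw [one_mul] at hp
    obtain ⟨N, h1, h2, h3, h4, h5⟩ := lem3 hγ hp (Or.inr ⟨ha, ha2⟩) Hc Hd
    exact ⟨N, h1, h2, h3, CAmat_one _, h4, h5⟩
  rcases Hc with rfl | ⟨hc, hc2⟩
  · rw [one_mul] at hp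
    obtain ⟨N, h1, h2, h3, h4, h5⟩ := lem3 hγ hp (Or.inr ⟨ha, ha2⟩) (Or.inr ⟨hb, hb2⟩) Hd
    exact ⟨N, h1, h2, h3, h4, CAmat_one _, h5⟩
  rcases Hd with rfl | ⟨hd, hd2⟩
  · rw [mul_one] at hp
    obtain ⟨N, h1, h2, h3, h4, h5⟩ :=
      lem3 hγ hp (Or.inr ⟨ha, ha2⟩) (Or.inr ⟨hb, hb2⟩) (Or.inr ⟨hc, hc2⟩)
    exact ⟨N, h1, h2, h3, h4, h5, CAmat_one _⟩
  · -- main case : all of a b c d trace zero with square -1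
    have h1 : b * (c * d) = -(γ • a) := by
      have h := congrArg (fun m => a * m) hp
      simp only [← mul_assoc] at h
      simp only [ha2, neg_one_mul, neg_mul, mul_smul_comm, mul_one, one_mul] at h
      try simp only [mul_assoc] at h
      exact neg_eq_iff_eq_neg.mp h
    have h2 : c * d = γ • (b * a) := by
      have h := congrArg (fun m => b * m) h1
      simp only [← mul_assoc] at h
      simp only [hb2, neg_one_mul, neg_mul, mul_neg, one_mul, mul_smul_comm] at h
      try simp only [mul_assoc] at h
      exact neg_inj.mp h
    have h3 : d = -(γ • (c * (b * a))) := by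
      have h := congrArg (fun m => c * m) h2
      simp only [← mul_assoc] at h
      simp only [hc2, neg_one_mul, neg_mul, one_mul, mul_smul_comm] at h
      try simp only [mul_assoc] at h
      exact neg_eq_iff_eq_neg.mp h
    have t_cba : (c * (b * a)).trace = 0 := by
      have h : (0 : ℂ) = -(γ * (c * (b * a)).trace) := by
        rw [← hd, h3, Matrix.trace_neg, Matrix.trace_smul, smul_eq_mul]
      exact (mul_eq_zero.mp (neg_eq_zero.mp h.symm)).resolve_left hγ
    have t_bac : (b * (a * c)).trace = 0 := (tr_cyc b a c).trans t_cba
    have t_acb : (a * (c * b)).trace = 0 := (tr_cyc a c b).trans t_bac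
    have t_abc : (a * (b * c)).trace = 0 := by
      have hs := congrArg (fun m => (m * c).trace) (tr0_mul_add_mul ha hb)
      simp only [add_mul, smul_mul_assoc, Matrix.trace_add, Matrix.trace_smul, one_mul,
        hc, smul_eq_mul, mul_zero] at hs
      rw [mul_assoc, mul_assoc] at hs
      rw [t_bac] at hs
      simpa using hs
    have t_cab : (c * (a * b)).trace = 0 := (tr_cyc a b c).symm.trans t_abc
    have t_bca : (b * (c * a)).trace = 0 := (tr_cyc b c a).trans t_abc
    by_cases hab : a * b = b * a
    · by_cases hac : a * c = c * a
      · by_cases hbc : b * c = c * b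
        · -- all commute
          refine ⟨a, mat_ne_zero_of_sq ha2, ha, Or.inl rfl, Or.inl hab.symm, Or.inl hac.symm, ?_⟩
          rw [h3]
          exact CAmat_neg (CAmat_smul _ (CAmat_mul (Or.inl hac.symm)
            (CAmat_mul (Or.inl hab.symm) (Or.inl rfl))))
        · -- N = [b,c]
          have hNtr : (b * c - c * b).trace = 0 := by
            rw [Matrix.trace_sub, Matrix.trace_mul_comm, sub_self]
          have hBn : CAmat b (b * c - c * b) := Or.inr (brkt_antiA hb2)
          have hCn : CAmat c (b * c - c * b) := Or.inr (brkt_antiB hc2)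
          have hAn : CAmat a (b * c - c * b) := by
            refine Or.inr (anticomm_of_tr0 ha hNtr ?_)
            rw [mul_sub, Matrix.trace_sub, t_abc]
            rw [t_acb]
            ring
          refine ⟨b * c - c * b, sub_ne_zero_of_ne hbc, hNtr, hAn, hBn, hCn, ?_⟩
          rw [h3]
          exact CAmat_neg (CAmat_smul _ (CAmat_mul hCn (CAmat_mul hBn hAn)))
      · -- N = [a,c]
        have hNtr : (a * c - c * a).trace = 0 := by
          rw [Matrix.trace_sub, Matrix.trace_mul_comm, sub_self]
        have hAn : CAmat a (a * c - c * a) := Or.inr (brkt_antiA ha2)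
        have hCn : CAmat c (a * c - c * a) := Or.inr (brkt_antiB hc2)
        have hBn : CAmat b (a * c - c * a) := by
          refine Or.inr (anticomm_of_tr0 hb hNtr ?_)
          rw [mul_sub, Matrix.trace_sub, t_bac, t_bca]
          ring
        refine ⟨a * c - c * a, sub_ne_zero_of_ne hac, hNtr, hAn, hBn, hCn, ?_⟩
        rw [h3]
        exact CAmat_neg (CAmat_smul _ (CAmat_mul hCn (CAmat_mul hBn hAn)))
    · -- N = [a,b]
      have hNtr : (a * b - b * a).trace = 0 := by
        rw [Matrix.trace_sub, Matrix.trace_mul_comm, sub_self]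
      have hAn : CAmat a (a * b - b * a) := Or.inr (brkt_antiA ha2)
      have hBn : CAmat b (a * b - b * a) := Or.inr (brkt_antiB hb2)
      have hCn : CAmat c (a * b - b * a) := by
        refine Or.inr (anticomm_of_tr0 hc hNtr ?_)
        rw [mul_sub, Matrix.trace_sub, t_cab, t_cba]
        ring
      refine ⟨a * b - b * a, sub_ne_zero_of_ne hab, hNtr, hAn, hBn, hCn, ?_⟩
      rw [h3]
      exact CAmat_neg (CAmat_smul _ (CAmat_mul hCn (CAmat_mul hBn hAn)))

lemma core6 (t : Fin 6 → Mat2) (H : ∀ k, HypM (t k)) {γ : ℂ} (hγ : γ ≠ 0)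
    (hp : t 0 * (t 1 * (t 2 * (t 3 * (t 4 * t 5)))) = γ • 1)
    {i j : Fin 6} (hij : i ≠ j) (hi : t i = 1) (hj : t j = 1) :
    ∃ N : Mat2, N ≠ 0 ∧ N.trace = 0 ∧ ∀ k, CAmat (t k) N := by
  fin_cases i <;> fin_cases j <;>
    first
      | exact absurd rfl hij
      | (simp only [show ((⟨0, by omega⟩ : Fin 6)) = 0 from rfl,
           show ((⟨1, by omega⟩ : Fin 6)) = 1 from rfl,
           show ((⟨2, by omega⟩ : Fin 6)) = 2 from rfl,
           show ((⟨3, by omega⟩ : Fin 6)) = 3 from rfl,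
           show ((⟨4, by omega⟩ : Fin 6)) = 4 from rfl,
           show ((⟨5, by omega⟩ : Fin 6)) = 5 from rfl] at hi hj
         simp only [hi, hj, one_mul, mul_one] at hp
         obtain ⟨N, h1, h2, h3, h4, h5, h6⟩ := lem4 hγ hp (H _) (H _) (H _) (H _)
         exact ⟨N, h1, h2, fun k => by
           fin_cases k <;>
             simp only [show ((⟨0, by omega⟩ : Fin 6)) = 0 from rfl,
               show ((⟨1, by omega⟩ : Fin 6)) = 1 from rfl,
               show ((⟨2, by omega⟩ : Fin 6)) = 2 from rfl,
               show ((⟨3, by omega⟩ : Fin 6)) = 3 from rfl,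
               show ((⟨4, by omega⟩ : Fin 6)) = 4 from rfl,
               show ((⟨5, by omega⟩ : Fin 6)) = 5 from rfl] <;>
             first
               | assumption
               | (rw [hi]; exact CAmat_one N)
               | (rw [hj]; exact CAmat_one N)⟩)


/-- Cayley–Hamilton for 2×2 matrices. -/
lemma ch2 (M : Mat2) : M * M - M.trace • M + M.det • (1 : Mat2) = 0 := by
  ext i j
  fin_cases i <;> fin_cases j <;>
    simp [Matrix.mul_apply, Fin.sum_univ_two, Matrix.trace_fin_two, Matrix.det_fin_two,
      Matrix.one_apply] <;> ring

lemma projPSL_out (g : PSL2C) : projPSL (Quotient.out g) = g := by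
  rw [projPSL, QuotientGroup.mk'_apply]
  exact QuotientGroup.out_eq' g

lemma central_coe {z : SL2C} (hz : z ∈ Subgroup.center SL2C) :
    ∃ r : ℂ, r ≠ 0 ∧ r ^ 2 = 1 ∧ (z : Mat2) = r • 1 := by
  obtain ⟨r, hr1, hr2⟩ := Matrix.SpecialLinearGroup.mem_center_iff.mp hz
  rw [Fintype.card_fin] at hr1
  refine ⟨r, fun h0 => by simp [h0] at hr1, hr1, ?_⟩
  rw [← hr2, Matrix.scalar_apply, Matrix.smul_one_eq_diagonal]

lemma central_of_proj_one {z : SL2C} (hz : projPSL z = 1) : z ∈ Subgroup.center SL2C :=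
  (QuotientGroup.eq_one_iff z).mp hz

lemma sl_mulVec_ne_zero (A : SL2C) {v : Fin 2 → ℂ} (hv : v ≠ 0) : (A : Mat2) *ᵥ v ≠ 0 := by
  intro h
  apply hv
  apply sl2_toLin'_injective A
  rw [Matrix.toLin'_apply, Matrix.toLin'_apply, h, Matrix.mulVec_zero]

lemma mk_congr {v w : Fin 2 → ℂ} (hv : v ≠ 0) (hw : w ≠ 0) (h : v = w) :
    Projectivization.mk ℂ v hv = Projectivization.mk ℂ w hw := by subst h; rfl

lemma pslAct_mk (g : PSL2C) (A : SL2C) (hA : projPSL A = g) (v : Fin 2 → ℂ) (hv : v ≠ 0) :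
    pslAct g (Projectivization.mk ℂ v hv) =
      Projectivization.mk ℂ ((A : Mat2) *ᵥ v) (sl_mulVec_ne_zero A hv) := by
  unfold pslAct
  rw [Projectivization.map_mk]
  have hmem : A⁻¹ * Quotient.out g ∈ Subgroup.center SL2C := by
    apply central_of_proj_one
    rw [_root_.map_mul, _root_.map_inv, hA, projPSL_out, inv_mul_cancel]
  obtain ⟨r, hr0, _, hr⟩ := central_coe hmem
  have hout : ((Quotient.out g : SL2C) : Mat2) = r • (A : Mat2) := by
    have : (Quotient.out g : SL2C) = A * (A⁻¹ * Quotient.out g) := by group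
    rw [this, Matrix.SpecialLinearGroup.coe_mul, hr, mul_smul_comm, mul_one]
  rw [Projectivization.mk_eq_mk_iff']
  refine ⟨r, ?_⟩
  rw [Matrix.toLin'_apply, hout, Matrix.smul_mulVec]

lemma pslAct_mul (g h : PSL2C) (x : P1) : pslAct (g * h) x = pslAct g (pslAct h x) := by
  induction x using Projectivization.ind with
  | h v hv =>
    rw [pslAct_mk h (Quotient.out h) (projPSL_out h),
      pslAct_mk g (Quotient.out g) (projPSL_out g),
      pslAct_mk (g * h) (Quotient.out g * Quotient.out h)
        (by rw [_root_.map_mul, projPSL_out, projPSL_out])]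
    apply mk_congr
    rw [Matrix.SpecialLinearGroup.coe_mul, ← Matrix.mulVec_mulVec]

lemma pslAct_one (x : P1) : pslAct 1 x = x := by
  induction x using Projectivization.ind with
  | h v hv =>
    rw [pslAct_mk 1 1 (_root_.map_one _)]
    apply mk_congr
    rw [Matrix.SpecialLinearGroup.coe_one, Matrix.one_mulVec]

/-- The set of eigenlines of a matrix. -/
def eigLines (N : Mat2) : Set P1 :=
  {x | ∃ (v : Fin 2 → ℂ) (hv : v ≠ 0) (c : ℂ), N *ᵥ v = c • v ∧ x = Projectivization.mk ℂ v hv}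

lemma eigLines_nonempty (N : Mat2) : (eigLines N).Nonempty := by
  obtain ⟨c, hc⟩ := Module.End.exists_eigenvalue (Matrix.toLin' N)
  obtain ⟨v, hvec⟩ := hc.exists_hasEigenvector
  have hv : v ≠ 0 := hvec.2
  have heq : N *ᵥ v = c • v := by
    have := hvec.apply_eq_smul
    rwa [Matrix.toLin'_apply] at this
  exact ⟨Projectivization.mk ℂ v hv, v, hv, c, heq, rfl⟩

lemma fun2_ne_zero {v : Fin 2 → ℂ} (hv : v ≠ 0) : v 0 ≠ 0 ∨ v 1 ≠ 0 := by
  by_contra hcon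
  push_neg at hcon
  apply hv
  funext i
  fin_cases i
  · exact hcon.1
  · exact hcon.2

lemma cross_ne_zero_of_mk_ne {v w : Fin 2 → ℂ} (hv : v ≠ 0) (hw : w ≠ 0)
    (h : Projectivization.mk ℂ v hv ≠ Projectivization.mk ℂ w hw) :
    v 0 * w 1 - v 1 * w 0 ≠ 0 := by
  intro hc
  apply h
  rw [Projectivization.mk_eq_mk_iff']
  rcases fun2_ne_zero hw with h0 | h1
  · refine ⟨v 0 / w 0, ?_⟩
    funext i
    fin_cases i <;> simp only [Pi.smul_apply, smul_eq_mul, Fin.zero_eta, Fin.mk_one]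
    · field_simp
    · field_simp
      linear_combination hc
  · refine ⟨v 1 / w 1, ?_⟩
    funext i
    fin_cases i <;> simp only [Pi.smul_apply, smul_eq_mul, Fin.zero_eta, Fin.mk_one]
    · field_simp
      linear_combination -hc
    · field_simp

lemma mat_zero_of_two_kernel {M : Mat2} {v w : Fin 2 → ℂ}
    (hv : M *ᵥ v = 0) (hw : M *ᵥ w = 0) (hcross : v 0 * w 1 - v 1 * w 0 ≠ 0) : M = 0 := by
  ext i j
  have h1 : M i 0 * v 0 + M i 1 * v 1 = 0 := by
    have := congrFun hv i
    simpa [Matrix.mulVec, dotProduct, Fin.sum_univ_two] using this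
  have h2 : M i 0 * w 0 + M i 1 * w 1 = 0 := by
    have := congrFun hw i
    simpa [Matrix.mulVec, dotProduct, Fin.sum_univ_two] using this
  fin_cases j
  · have : M i 0 * (v 0 * w 1 - v 1 * w 0) = 0 := by linear_combination w 1 * h1 - v 1 * h2
    simpa using (mul_eq_zero.mp this).resolve_right hcross
  · have : M i 1 * (v 0 * w 1 - v 1 * w 0) = 0 := by linear_combination -(w 0 * h1) + v 0 * h2
    simpa using (mul_eq_zero.mp this).resolve_right hcross

lemma eigenvalue_quad {N : Mat2} {v : Fin 2 → ℂ} {c : ℂ} (hv : v ≠ 0) (h : N *ᵥ v = c • v) :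
    c ^ 2 - N.trace * c + N.det = 0 := by
  have hker : (N - c • 1) *ᵥ v = 0 := by
    rw [Matrix.sub_mulVec, Matrix.smul_mulVec, Matrix.one_mulVec, h, sub_self]
  have hdet : (N - c • (1 : Mat2)).det = 0 := by
    rw [← Matrix.exists_mulVec_eq_zero_iff]
    exact ⟨v, hv, hker⟩
  rw [Matrix.det_fin_two] at hdet
  rw [Matrix.trace_fin_two, Matrix.det_fin_two]
  simp only [Matrix.sub_apply, Matrix.smul_apply, Matrix.one_apply, smul_eq_mul] at hdet
  norm_num at hdet
  linear_combination hdet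

lemma eig_val_ne {N : Mat2} (hN : N ≠ 0) (htr : N.trace = 0) {v w : Fin 2 → ℂ} {c d : ℂ}
    (hv : v ≠ 0) (hw : w ≠ 0) (hvw : Projectivization.mk ℂ v hv ≠ Projectivization.mk ℂ w hw)
    (h1 : N *ᵥ v = c • v) (h2 : N *ᵥ w = d • w) : c ≠ d := by
  rintro rfl
  have hcross := cross_ne_zero_of_mk_ne hv hw hvw
  have hv' : (N - c • 1) *ᵥ v = 0 := by
    rw [Matrix.sub_mulVec, Matrix.smul_mulVec, Matrix.one_mulVec, h1, sub_self]
  have hw' : (N - c • 1) *ᵥ w = 0 := by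
    rw [Matrix.sub_mulVec, Matrix.smul_mulVec, Matrix.one_mulVec, h2, sub_self]
  have hM := mat_zero_of_two_kernel hv' hw' hcross
  have hNc : N = c • 1 := by
    have := sub_eq_zero.mp hM
    exact this
  have hc0 : c = 0 := by
    have h2 : c * 2 = 0 := by
      have hh := htr
      rw [hNc, Matrix.trace_smul, Matrix.trace_one, Fintype.card_fin] at hh
      simpa [smul_eq_mul] using hh
    rcases mul_eq_zero.mp h2 with h | h
    · exact h
    · norm_num at h
  apply hN
  rw [hNc, hc0, zero_smul]

lemma eigLines_collapse {N : Mat2} (hN : N ≠ 0) (htr : N.trace = 0) :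
    ∀ x ∈ eigLines N, ∀ y ∈ eigLines N, ∀ z ∈ eigLines N, x = y ∨ x = z ∨ y = z := by
  rintro x ⟨v, hv, c, hcv, rfl⟩ y ⟨w, hw, d, hdw, rfl⟩ z ⟨u, hu, e, heu, rfl⟩
  by_contra hcon
  push_neg at hcon
  obtain ⟨hxy, hxz, hyz⟩ := hcon
  have hcd : c ≠ d := eig_val_ne hN htr hv hw hxy hcv hdw
  have hce : c ≠ e := eig_val_ne hN htr hv hu hxz hcv heu
  have hde : d ≠ e := eig_val_ne hN htr hw hu hyz hdw heu
  have qc := eigenvalue_quad hv hcv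
  have qd := eigenvalue_quad hw hdw
  have qe := eigenvalue_quad hu heu
  rw [htr] at qc qd qe
  have hcd2 : (c - d) * (c + d) = 0 := by linear_combination qc - qd
  have hce2 : (c - e) * (c + e) = 0 := by linear_combination qc - qe
  have h1 : d = -c := by
    rcases mul_eq_zero.mp hcd2 with h | h
    · exact absurd (by linear_combination h) hcd
    · linear_combination h
  have h2 : e = -c := by
    rcases mul_eq_zero.mp hce2 with h | h
    · exact absurd (by linear_combination h) hce
    · linear_combination h
  exact hde (h1.trans h2.symm)

lemma collapse_finite {S : Set P1} (hne : S.Nonempty)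
    (h3 : ∀ x ∈ S, ∀ y ∈ S, ∀ z ∈ S, x = y ∨ x = z ∨ y = z) :
    S.Finite ∧ S.ncard ≤ 2 := by
  obtain ⟨p, hp⟩ := hne
  by_cases hq : ∃ q ∈ S, q ≠ p
  · obtain ⟨q, hqS, hqp⟩ := hq
    have hsub : S ⊆ {p, q} := by
      intro z hz
      rcases h3 z hz p hp q hqS with h | h | h
      · exact Or.inl h
      · exact Or.inr h
      · exact absurd h.symm hqp
    have hfin : S.Finite := (Set.toFinite ({p, q} : Set P1)).subset hsub
    refine ⟨hfin, ?_⟩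
    calc S.ncard ≤ ({p, q} : Set P1).ncard := Set.ncard_le_ncard hsub (Set.toFinite _)
      _ ≤ 2 := by rw [Set.ncard_pair (Ne.symm hqp)]
  · push_neg at hq
    have hsub : S ⊆ {p} := fun z hz => hq z hz
    have hfin : S.Finite := (Set.toFinite ({p} : Set P1)).subset hsub
    refine ⟨hfin, ?_⟩
    calc S.ncard ≤ ({p} : Set P1).ncard := Set.ncard_le_ncard hsub (Set.toFinite _)
      _ ≤ 2 := by rw [Set.ncard_singleton]; norm_num

/-- The subgroup of `PSL2C` of elements with a lift commuting or anticommuting with `N`. -/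
def stabSub (N : Mat2) : Subgroup PSL2C where
  carrier := {g | ∃ A : SL2C, projPSL A = g ∧ CAmat (A : Mat2) N}
  one_mem' := ⟨1, _root_.map_one _, by rw [Matrix.SpecialLinearGroup.coe_one]; exact CAmat_one N⟩
  mul_mem' := by
    rintro g h ⟨A, hA, hCA⟩ ⟨B, hB, hCB⟩
    exact ⟨A * B, by rw [_root_.map_mul, hA, hB],
      by rw [Matrix.SpecialLinearGroup.coe_mul]; exact CAmat_mul hCA hCB⟩
  inv_mem' := by
    rintro g ⟨A, hA, hCA⟩
    refine ⟨A⁻¹, by rw [_root_.map_inv, hA], ?_⟩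
    apply CAmat_of_inv (A := (A : Mat2))
    · rw [← Matrix.SpecialLinearGroup.coe_mul, mul_inv_cancel,
        Matrix.SpecialLinearGroup.coe_one]
    · rw [← Matrix.SpecialLinearGroup.coe_mul, inv_mul_cancel,
        Matrix.SpecialLinearGroup.coe_one]
    · exact hCA

lemma stab_maps {N : Mat2} {g : PSL2C} (hg : g ∈ stabSub N) :
    pslAct g '' eigLines N ⊆ eigLines N := by
  rintro _ ⟨x, hx, rfl⟩
  obtain ⟨v, hv, c, hev, rfl⟩ := hx
  obtain ⟨A, hA, hCA⟩ := hg
  rw [pslAct_mk g A hA]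
  rcases hCA with hcom | hacom
  · refine ⟨(A : Mat2) *ᵥ v, sl_mulVec_ne_zero A hv, c, ?_, rfl⟩
    rw [Matrix.mulVec_mulVec, ← hcom, ← Matrix.mulVec_mulVec, hev, Matrix.mulVec_smul]
  · refine ⟨(A : Mat2) *ᵥ v, sl_mulVec_ne_zero A hv, -c, ?_, rfl⟩
    have hNA : (N : Mat2) * A = -((A : Mat2) * N) := by
      rw [hacom, neg_neg]
    rw [Matrix.mulVec_mulVec, hNA, Matrix.neg_mulVec, ← Matrix.mulVec_mulVec, hev,
      Matrix.mulVec_smul, neg_smul]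

lemma stab_fix {N : Mat2} {g : PSL2C} (hg : g ∈ stabSub N) :
    pslAct g '' eigLines N = eigLines N := by
  apply subset_antisymm (stab_maps hg)
  intro x hx
  have h2 := stab_maps ((stabSub N).inv_mem hg)
  have hmem : pslAct g⁻¹ x ∈ eigLines N := h2 ⟨x, hx, rfl⟩
  refine ⟨pslAct g⁻¹ x, hmem, ?_⟩
  rw [← pslAct_mul, mul_inv_cancel, pslAct_one]

lemma all_in_stab {f : GammaP →* PSL2C} {N : Mat2} (hq : ∀ i : Fin 6, f (qgen i) ∈ stabSub N) :
    ∀ x : GammaP, f x ∈ stabSub N := by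
  intro x
  have hx : x ∈ Subgroup.closure (Set.range (PresentedGroup.of (rels := pentagonRels))) := by
    rw [PresentedGroup.closure_range_of]
    trivial
  induction hx using Subgroup.closure_induction with
  | mem y hy => obtain ⟨i, rfl⟩ := hy; exact hq i
  | one => rw [_root_.map_one]; exact (stabSub N).one_mem
  | mul y z _ _ hy hz => rw [_root_.map_mul]; exact (stabSub N).mul_mem hy hz
  | inv y _ hy => rw [_root_.map_inv]; exact (stabSub N).inv_mem hy

end Statement8Aux


lemma hyp_of_sq_scalar {M : Mat2} (hdet : M.det = 1) {r : ℂ} (hr : M * M = r • 1) :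
    (∃ s : ℂ, M = s • 1) ∨ (M.trace = 0 ∧ M * M = -1) := by
  have hch := ch2 M
  rw [hr, hdet, one_smul] at hch
  rw [sub_add_eq_add_sub, sub_eq_zero] at hch
  have key : M.trace • M = r • (1 : Mat2) + 1 := hch.symm
  by_cases htr : M.trace = 0
  · right
    refine ⟨htr, ?_⟩
    rw [htr, zero_smul] at key
    have hrn : r • (1 : Mat2) = -1 := by
      have := key.symm
      exact eq_neg_of_add_eq_zero_left this
    rw [hr, hrn]
  · left
    refine ⟨M.trace⁻¹ * (r + 1), ?_⟩
    have h2 := congrArg (fun Z : Mat2 => M.trace⁻¹ • Z) key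
    simp only [inv_smul_smul₀ htr] at h2
    conv_lhs => rw [h2]
    module

/-- if `ρ' : Γ → PSL(2,ℂ)` kills at least two of the `qᵢ`, then `ρ' ∘ ι` is
elementary. -/
theorem statement8 (ρ' : GammaP →* PSL2C)
    (h : ∃ i j : Fin 6, i ≠ j ∧ ρ' (qgen i) = 1 ∧ ρ' (qgen j) = 1) :
    IsElementarySubgroup (ρ'.comp iota).range := by
  classical
  obtain ⟨i, j, hij, hi1, hj1⟩ := h
  set X : Fin 6 → SL2C :=
    fun k => if ρ' (qgen k) = 1 then 1 else Quotient.out (ρ' (qgen k)) with hXdef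
  have hproj : ∀ k, projPSL (X k) = ρ' (qgen k) := by
    intro k
    by_cases hk : ρ' (qgen k) = 1
    · simp [hXdef, hk]
    · simp [hXdef, hk, projPSL_out]
  have hXi : X i = 1 := by simp [hXdef, hi1]
  have hXj : X j = 1 := by simp [hXdef, hj1]
  have hH : ∀ k, HypM ((X k : Mat2)) := by
    intro k
    by_cases hk : ρ' (qgen k) = 1
    · left
      simp [hXdef, hk]
    · have hsq : projPSL (X k * X k) = 1 := by
        rw [_root_.map_mul, hproj, ← _root_.map_mul, qgen_mul_self, _root_.map_one]
      obtain ⟨r, hr0, hr2, hr⟩ := central_coe (central_of_proj_one hsq)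
      rw [Matrix.SpecialLinearGroup.coe_mul] at hr
      have hdet : ((X k : Mat2)).det = 1 := (X k).2
      rcases hyp_of_sq_scalar hdet hr with ⟨s, hs⟩ | hgood
      · exfalso
        apply hk
        rw [← hproj k]
        apply (QuotientGroup.eq_one_iff (X k)).mpr
        apply Matrix.SpecialLinearGroup.mem_center_iff.mpr
        refine ⟨s, ?_, ?_⟩
        · rw [Fintype.card_fin]
          have : ((X k : Mat2)).det = s ^ 2 * 1 := by
            rw [hs, Matrix.det_smul, Matrix.det_one, Fintype.card_fin]
          rw [hdet] at this
          linear_combination -this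
        · rw [Matrix.scalar_apply, ← Matrix.smul_one_eq_diagonal, ← hs]
      · exact Or.inr hgood
  have hrel : projPSL (X 0 * (X 1 * (X 2 * (X 3 * (X 4 * X 5))))) = 1 := by
    simp only [_root_.map_mul, hproj]
    have hq := congrArg ρ' qgen_prod
    simpa only [_root_.map_mul, _root_.map_one] using hq
  obtain ⟨γ, hγ0, hγ2, hγ⟩ := central_coe (central_of_proj_one hrel)
  simp only [Matrix.SpecialLinearGroup.coe_mul] at hγ
  obtain ⟨N, hN0, hNtr, hCA⟩ := core6 (fun k => ((X k : Mat2))) hH hγ0 hγ hij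
    (by show ((X i : Mat2)) = 1; rw [hXi, Matrix.SpecialLinearGroup.coe_one])
    (by show ((X j : Mat2)) = 1; rw [hXj, Matrix.SpecialLinearGroup.coe_one])
  have hgen : ∀ k, ρ' (qgen k) ∈ stabSub N := fun k => ⟨X k, hproj k, hCA k⟩
  obtain ⟨hfin, hcard⟩ := collapse_finite (eigLines_nonempty N) (eigLines_collapse hN0 hNtr)
  left
  refine ⟨eigLines N, eigLines_nonempty N, hfin, hcard, ?_⟩
  rintro g ⟨w, rfl⟩
  exact stab_fix (all_in_stab hgen (iota w))
end
end

section
/- Let α ∈ PSL(2,ℂ) be loxodromic with attracting fixed point p⁺ and repelling fixed point p⁻, and let β ∈ PSL(2,ℂ). If β(p⁺) ≠ p⁻, then there exists K > 0 such that αᵏβ is loxodromic for all integers k ≥ K, and moreover |tr²(αᵏβ)| → ∞ as k → +∞. Symmetrically, if β(p⁻) ≠ p⁺, then there exists K > 0 such that αᵏβ is loxodromic for all integers k ≤ -K. -/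
/- Common setup: PSL(2,ℂ), its action on ℙ¹(ℂ), loxodromic/parabolic/elliptic elements,
elementary subgroups, surface groups, the pentagon group Γ and the embedding ι. -/

noncomputable section

open Matrix

section Aux16

open Filter

lemma aux_zpow_tendsto {r : ℝ} (hr : 1 < r) :
    Tendsto (fun k : ℤ => r ^ k) atTop atTop := by
  rw [tendsto_atTop_atTop]
  intro b
  obtain ⟨N, hN⟩ := (tendsto_atTop_atTop.mp (tendsto_pow_atTop_atTop_of_one_lt hr)) b
  refine ⟨(N : ℤ), fun k hk => ?_⟩
  calc b ≤ r ^ N := hN N le_rfl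
  _ = r ^ (N : ℤ) := (zpow_natCast r N).symm
  _ ≤ r ^ k := zpow_le_zpow_right₀ hr.le hk

lemma aux_abs_lower (c f l : ℂ) (k : ℤ) (hk : 0 ≤ k) (hl : 1 ≤ ‖l‖) :
    ‖c‖ * ‖l‖ ^ k - ‖f‖
      ≤ ‖c * l ^ k + f * l ^ (-k)‖ := by
  have h1 : ‖c * l ^ k‖ - ‖f * l ^ (-k)‖
      ≤ ‖c * l ^ k + f * l ^ (-k)‖ := by
    have := norm_sub_norm_le (E := ℂ) (c * l ^ k) (-(f * l ^ (-k)))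
    simpa [sub_neg_eq_add] using this
  have h2 : ‖f * l ^ (-k)‖ ≤ ‖f‖ := by
    rw [norm_mul, norm_zpow]
    exact mul_le_of_le_one_right (norm_nonneg f)
      (zpow_le_one_of_nonpos₀ hl (neg_nonpos.mpr hk))
  have h3 : ‖c * l ^ k‖ = ‖c‖ * ‖l‖ ^ k := by
    rw [norm_mul, norm_zpow]
  linarith

lemma aux_main_tendsto (c f l : ℂ) (hc : c ≠ 0) (hl : 1 < ‖l‖) :
    Tendsto (fun k : ℤ => ‖(c * l ^ k + f * l ^ (-k)) ^ 2‖) atTop atTop := by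
  have h0 : Tendsto (fun k : ℤ => ‖c‖ * ‖l‖ ^ k - ‖f‖)
      atTop atTop := by
    have := (aux_zpow_tendsto hl).const_mul_atTop
      (norm_pos_iff.mpr hc)
    simpa [sub_eq_add_neg] using this.atTop_add tendsto_const_nhds
  have h1 : Tendsto (fun k : ℤ => ‖c * l ^ k + f * l ^ (-k)‖) atTop atTop := by
    refine tendsto_atTop_mono' _ ?_ h0
    filter_upwards [eventually_ge_atTop (0:ℤ)] with k hk
    exact aux_abs_lower c f l k hk hl.le
  have h2 : Tendsto (fun x : ℝ => x ^ 2) atTop atTop :=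
    tendsto_pow_atTop (two_ne_zero)
  have := h2.comp h1
  simpa [Function.comp_def, norm_pow] using this

lemma aux_trSq (M : SL2C) :
    trSq (projPSL M) = (Matrix.trace ((M : SL2C) : Matrix (Fin 2) (Fin 2) ℂ)) ^ 2 := by
  have hout : projPSL (Quotient.out (projPSL M)) = projPSL M := by
    simp [projPSL]
  have hout' : QuotientGroup.mk' (Subgroup.center SL2C) (Quotient.out (projPSL M))
      = QuotientGroup.mk' (Subgroup.center SL2C) M := hout
  rw [QuotientGroup.mk'_eq_mk'] at hout'
  obtain ⟨z, hz, hzeq⟩ := hout'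
  obtain ⟨r, hr2, hrz⟩ := Matrix.SpecialLinearGroup.mem_center_iff.mp hz
  have hr2' : r ^ 2 = 1 := by simpa using hr2
  have hcoe : ((M : SL2C) : Matrix (Fin 2) (Fin 2) ℂ)
      = ((Quotient.out (projPSL M) : SL2C) : Matrix (Fin 2) (Fin 2) ℂ)
        * Matrix.scalar (Fin 2) r := by
    rw [hrz, ← Matrix.SpecialLinearGroup.coe_mul, hzeq]
  have htr : Matrix.trace ((M : SL2C) : Matrix (Fin 2) (Fin 2) ℂ)
      = Matrix.trace ((Quotient.out (projPSL M) : SL2C) : Matrix (Fin 2) (Fin 2) ℂ) * r := by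
    rw [hcoe, Matrix.scalar_apply, Matrix.trace_fin_two]
    rw [Matrix.mul_diagonal, Matrix.mul_diagonal, Matrix.trace_fin_two, add_mul]
  rw [trSq, htr]
  rw [mul_pow, hr2', mul_one]

lemma aux_eig_nat (A : SL2C) (v : Fin 2 → ℂ) (l : ℂ)
    (h : (A : Matrix (Fin 2) (Fin 2) ℂ) *ᵥ v = l • v) (n : ℕ) :
    ((A ^ n : SL2C) : Matrix (Fin 2) (Fin 2) ℂ) *ᵥ v = l ^ n • v := by
  induction n with
  | zero => simp
  | succ n ih =>
      rw [pow_succ, Matrix.SpecialLinearGroup.coe_mul, ← Matrix.mulVec_mulVec, h,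
        Matrix.mulVec_smul, ih, smul_smul, mul_comm, ← pow_succ]

lemma aux_eig_inv (A : SL2C) (v : Fin 2 → ℂ) (l : ℂ) (hl : l ≠ 0)
    (h : (A : Matrix (Fin 2) (Fin 2) ℂ) *ᵥ v = l • v) :
    ((A⁻¹ : SL2C) : Matrix (Fin 2) (Fin 2) ℂ) *ᵥ v = l⁻¹ • v := by
  have h1 : ((A⁻¹ : SL2C) : Matrix (Fin 2) (Fin 2) ℂ) *ᵥ
      ((A : Matrix (Fin 2) (Fin 2) ℂ) *ᵥ v) = v := by
    rw [Matrix.mulVec_mulVec, ← Matrix.SpecialLinearGroup.coe_mul, inv_mul_cancel,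
      Matrix.SpecialLinearGroup.coe_one, Matrix.one_mulVec]
  rw [h, Matrix.mulVec_smul] at h1
  exact ((inv_smul_eq_iff₀ hl).mpr h1.symm).symm

lemma aux_eig_zpow (A : SL2C) (v : Fin 2 → ℂ) (l : ℂ) (hl : l ≠ 0)
    (h : (A : Matrix (Fin 2) (Fin 2) ℂ) *ᵥ v = l • v) (k : ℤ) :
    ((A ^ k : SL2C) : Matrix (Fin 2) (Fin 2) ℂ) *ᵥ v = l ^ k • v := by
  rcases Int.eq_nat_or_neg k with ⟨n, rfl | rfl⟩
  · rw [zpow_natCast, zpow_natCast]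
    exact aux_eig_nat A v l h n
  · rw [_root_.zpow_neg, zpow_natCast, _root_.zpow_neg, zpow_natCast]
    exact aux_eig_inv (A ^ n) v (l ^ n) (pow_ne_zero n hl) (aux_eig_nat A v l h n)

lemma aux_trace_via_basis (M : Matrix (Fin 2) (Fin 2) ℂ)
    (bas : Module.Basis (Fin 2) ℂ (Fin 2 → ℂ)) :
    Matrix.trace M = bas.repr (M *ᵥ bas 0) 0 + bas.repr (M *ᵥ bas 1) 1 := by
  have h := LinearMap.trace_eq_matrix_trace ℂ bas (Matrix.toLin' M)
  have h' := LinearMap.trace_eq_matrix_trace ℂ (Pi.basisFun ℂ (Fin 2)) (Matrix.toLin' M)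
  rw [LinearMap.toMatrix_eq_toMatrix', LinearMap.toMatrix'_toLin'] at h'
  have key : Matrix.trace M
      = Matrix.trace (LinearMap.toMatrix bas bas (Matrix.toLin' M)) := by rw [← h, h']
  rw [key, Matrix.trace_fin_two, LinearMap.toMatrix_apply, LinearMap.toMatrix_apply,
    Matrix.toLin'_apply, Matrix.toLin'_apply]

end Aux16

/-- powers of a loxodromic element times `β` are eventually loxodromic, with
squared traces going to infinity. -/
theorem statement16 (α β : PSL2C) (pp pm : P1) (hα : IsLoxodromic α)
    (h : IsAttrRep α pp pm) :
    (pslAct β pp ≠ pm → ∃ K : ℤ, 0 < K ∧ (∀ k : ℤ, K ≤ k → IsLoxodromic (α ^ k * β)) ∧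
      Filter.Tendsto (fun k : ℤ => ‖trSq (α ^ k * β)‖) Filter.atTop Filter.atTop) ∧
    (pslAct β pm ≠ pp → ∃ K : ℤ, 0 < K ∧ ∀ k : ℤ, k ≤ -K → IsLoxodromic (α ^ k * β)) := by
  classical
  obtain ⟨A, hA, l, hl, v, w, hv, hw, hAv, hAw, hpp, hpm⟩ := h
  set B : SL2C := Quotient.out β with hBdef
  have hB : projPSL B = β := by
    rw [hBdef]
    exact Quotient.out_eq β
  have hl0 : l ≠ 0 := by
    intro h0; rw [h0] at hl; simp at hl; linarith
  have hli0 : l⁻¹ ≠ 0 := inv_ne_zero hl0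
  have hlne : l - l⁻¹ ≠ 0 := by
    intro h0
    have : l = l⁻¹ := by linear_combination h0
    have habs : ‖l‖ = ‖l⁻¹‖ := by rw [← this]
    rw [norm_inv] at habs
    have h1 : ‖l⁻¹‖ < 1 := by
      rw [norm_inv]
      exact inv_lt_one_of_one_lt₀ hl
    rw [← this] at h1
    linarith
  -- linear independence of the eigenvectors
  have hlind : LinearIndependent ℂ ![v, w] := by
    rw [LinearIndependent.pair_iff]
    intro s t hst
    have h1 : s • (l • v) + t • (l⁻¹ • w) = 0 := by
      have h1' : (A : Matrix (Fin 2) (Fin 2) ℂ) *ᵥ (s • v + t • w) = 0 := by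
        rw [hst, Matrix.mulVec_zero]
      rwa [Matrix.mulVec_add, Matrix.mulVec_smul, Matrix.mulVec_smul, hAv, hAw] at h1'
    have h2 : l⁻¹ • (s • v + t • w) = 0 := by rw [hst, smul_zero]
    have h3 : (s * (l - l⁻¹)) • v = 0 := by
      have e : (s * (l - l⁻¹)) • v
          = (s • (l • v) + t • (l⁻¹ • w)) - l⁻¹ • (s • v + t • w) := by module
      rw [e, h1, h2, sub_zero]
    have hs : s = 0 := by
      rcases smul_eq_zero.mp h3 with h4 | h4
      · rcases mul_eq_zero.mp h4 with h5 | h5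
        · exact h5
        · exact absurd h5 hlne
      · exact absurd h4 hv
    refine ⟨hs, ?_⟩
    rw [hs, zero_smul, zero_add] at hst
    rcases smul_eq_zero.mp hst with h4 | h4
    · exact h4
    · exact absurd h4 hw
  have hcard : Fintype.card (Fin 2) = Module.finrank ℂ (Fin 2 → ℂ) := by simp
  set bas := basisOfLinearIndependentOfCardEqFinrank hlind hcard with hbasdef
  have hbc : ⇑bas = ![v, w] := coe_basisOfLinearIndependentOfCardEqFinrank _ _
  have hb0 : bas 0 = v := by rw [hbc]; rfl
  have hb1 : bas 1 = w := by rw [hbc]; rfl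
  set c := bas.repr ((B : Matrix (Fin 2) (Fin 2) ℂ) *ᵥ v) 0 with hcdef
  set d := bas.repr ((B : Matrix (Fin 2) (Fin 2) ℂ) *ᵥ v) 1 with hddef
  set e := bas.repr ((B : Matrix (Fin 2) (Fin 2) ℂ) *ᵥ w) 0 with hedef
  set f := bas.repr ((B : Matrix (Fin 2) (Fin 2) ℂ) *ᵥ w) 1 with hfdef
  have hBv : (B : Matrix (Fin 2) (Fin 2) ℂ) *ᵥ v = c • v + d • w := by
    have h' := bas.sum_repr ((B : Matrix (Fin 2) (Fin 2) ℂ) *ᵥ v)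
    rw [Fin.sum_univ_two, hb0, hb1] at h'
    exact h'.symm
  have hBw : (B : Matrix (Fin 2) (Fin 2) ℂ) *ᵥ w = e • v + f • w := by
    have h' := bas.sum_repr ((B : Matrix (Fin 2) (Fin 2) ℂ) *ᵥ w)
    rw [Fin.sum_univ_two, hb0, hb1] at h'
    exact h'.symm
  -- the trace formula
  have htr : ∀ k : ℤ, Matrix.trace (((A ^ k * B : SL2C)) : Matrix (Fin 2) (Fin 2) ℂ)
      = c * l ^ k + f * l ^ (-k) := by
    intro k
    have hAk_v := aux_eig_zpow A v l hl0 hAv k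
    have hAk_w := aux_eig_zpow A w l⁻¹ hli0 hAw k
    rw [_root_.inv_zpow, ← _root_.zpow_neg] at hAk_w
    have hm : ((A ^ k * B : SL2C) : Matrix (Fin 2) (Fin 2) ℂ) *ᵥ v
        = (c * l ^ k) • v + (d * l ^ (-k)) • w := by
      rw [Matrix.SpecialLinearGroup.coe_mul, ← Matrix.mulVec_mulVec, hBv, Matrix.mulVec_add,
        Matrix.mulVec_smul, Matrix.mulVec_smul, hAk_v, hAk_w, smul_smul, smul_smul]
    have hm' : ((A ^ k * B : SL2C) : Matrix (Fin 2) (Fin 2) ℂ) *ᵥ w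
        = (e * l ^ k) • v + (f * l ^ (-k)) • w := by
      rw [Matrix.SpecialLinearGroup.coe_mul, ← Matrix.mulVec_mulVec, hBw, Matrix.mulVec_add,
        Matrix.mulVec_smul, Matrix.mulVec_smul, hAk_v, hAk_w, smul_smul, smul_smul]
    rw [aux_trace_via_basis _ bas, hb0, hb1, hm, hm', ← hb0, ← hb1]
    simp only [map_add, _root_.map_smul, Module.Basis.repr_self, Finsupp.smul_single, smul_eq_mul,
      Finsupp.coe_add, Pi.add_apply, Finsupp.single_apply]
    norm_num
  have htrSq : ∀ k : ℤ, trSq (α ^ k * β) = (c * l ^ k + f * l ^ (-k)) ^ 2 := by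
    intro k
    have hq : α ^ k * β = projPSL (A ^ k * B) := by
      rw [_root_.map_mul, map_zpow, hA, hB]
    rw [hq, aux_trSq, htr k]
  have hBv0 : (B : Matrix (Fin 2) (Fin 2) ℂ) *ᵥ v ≠ 0 := by
    intro hzero
    have h' : Matrix.toLin' (B : Matrix (Fin 2) (Fin 2) ℂ) v
        = Matrix.toLin' (B : Matrix (Fin 2) (Fin 2) ℂ) 0 := by
      rw [Matrix.toLin'_apply, hzero, map_zero]
    exact hv (sl2_toLin'_injective B h')
  have hBw0 : (B : Matrix (Fin 2) (Fin 2) ℂ) *ᵥ w ≠ 0 := by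
    intro hzero
    have h' : Matrix.toLin' (B : Matrix (Fin 2) (Fin 2) ℂ) w
        = Matrix.toLin' (B : Matrix (Fin 2) (Fin 2) ℂ) 0 := by
      rw [Matrix.toLin'_apply, hzero, map_zero]
    exact hw (sl2_toLin'_injective B h')
  have hactv : pslAct β (Projectivization.mk ℂ v hv)
      = Projectivization.mk ℂ ((B : Matrix (Fin 2) (Fin 2) ℂ) *ᵥ v) hBv0 := by
    rw [pslAct, Projectivization.map_mk]
    simp only [Matrix.toLin'_apply]
    rfl
  have hactw : pslAct β (Projectivization.mk ℂ w hw)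
      = Projectivization.mk ℂ ((B : Matrix (Fin 2) (Fin 2) ℂ) *ᵥ w) hBw0 := by
    rw [pslAct, Projectivization.map_mk]
    simp only [Matrix.toLin'_apply]
    rfl
  have lox_of : ∀ g : PSL2C, 4 < ‖trSq g‖ → IsLoxodromic g := by
    rintro g hg ⟨r, hr0, hr4, hr⟩
    rw [hr] at hg
    rw [Complex.norm_real, Real.norm_eq_abs, abs_of_nonneg hr0] at hg
    linarith
  constructor
  · -- positive direction
    intro h1
    have hc0 : c ≠ 0 := by
      intro hc
      apply h1
      rw [hpp, hpm, hactv, Projectivization.mk_eq_mk_iff']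
      exact ⟨d, by rw [hBv, hc, zero_smul, zero_add]⟩
    have htend : Filter.Tendsto (fun k : ℤ => ‖trSq (α ^ k * β)‖)
        Filter.atTop Filter.atTop := by
      simp only [htrSq]
      exact aux_main_tendsto c f l hc0 hl
    obtain ⟨K0, hK0⟩ := Filter.eventually_atTop.mp (htend.eventually_gt_atTop 4)
    refine ⟨max K0 1, lt_of_lt_of_le one_pos (le_max_right _ _), fun k hk =>
      lox_of _ (hK0 k (le_trans (le_max_left _ _) hk)), htend⟩
  · -- negative direction
    intro h2
    have hf0 : f ≠ 0 := by
      intro hf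
      apply h2
      rw [hpp, hpm, hactw, Projectivization.mk_eq_mk_iff']
      exact ⟨e, by rw [hBw, hf, zero_smul, add_zero]⟩
    have htend2 : Filter.Tendsto (fun j : ℤ => ‖trSq (α ^ (-j) * β)‖)
        Filter.atTop Filter.atTop := by
      have key : ∀ j : ℤ, trSq (α ^ (-j) * β) = (f * l ^ j + c * l ^ (-j)) ^ 2 := by
        intro j
        rw [htrSq (-j), neg_neg]
        ring
      simp only [key]
      exact aux_main_tendsto f c l hf0 hl
    obtain ⟨K0, hK0⟩ := Filter.eventually_atTop.mp (htend2.eventually_gt_atTop 4)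
    refine ⟨max K0 1, lt_of_lt_of_le one_pos (le_max_right _ _), fun k hk => ?_⟩
    have h4 : 4 < ‖trSq (α ^ k * β)‖ := by
      have h5 := hK0 (-k) (by have := le_max_left K0 1; omega)
      simpa [neg_neg] using h5
    exact lox_of _ h4
end
end
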